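/- arXiv:1504.07348 — 7 statements merged into one kernel-verified Lean document; each statement's English description precedes it below -/
import Mathlib

section
/- Fix n ≥ 2 and define c(n,i) = (1/(i+1)) · C(n-i-2, i) · C(n, i). Then the sequence c(n,0), c(n,1), ..., c(n, ⌊n/2⌋ - 1) is strictly log concave: for all 0 < i < ⌊n/2⌋ - 1, c(n,i)^2 > c(n,i-1) · c(n,i+1). -/
/-- The Kazhdan-Lusztig coefficient `c(n,i) = (1/(i+1)) · C(n-i-2, i) · C(n, i)`
of the uniform matroid of rank `n-1` on `n` elements, as a rational number. -/
noncomputable def cKL (n i : ℕ) : ℚ :=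
  (1 / (i + 1 : ℚ)) * (Nat.choose (n - i - 2) i) * (Nat.choose n i)

set_option maxHeartbeats 1000000 in
/-- For `n ≥ 2`, the sequence `c(n,0), …, c(n, ⌊n/2⌋ - 1)` is strictly log concave:
for all `0 < i < ⌊n/2⌋ - 1`, `c(n,i)^2 > c(n,i-1) · c(n,i+1)`. -/
theorem stmt_1 (n : ℕ) (hn : 2 ≤ n) (i : ℕ) (hi0 : 0 < i) (hi : i < n / 2 - 1) :
    cKL n i ^ 2 > cKL n (i - 1) * cKL n (i + 1) := by
  obtain ⟨j, rfl⟩ : ∃ j, i = j + 1 := ⟨i - 1, by omega⟩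
  obtain ⟨c, rfl⟩ : ∃ c, n = 2 * j + c + 6 := ⟨n - (2 * j + 6), by omega⟩
  have hjq : (0 : ℚ) ≤ (j : ℚ) := Nat.cast_nonneg j
  have hcq : (0 : ℚ) ≤ (c : ℚ) := Nat.cast_nonneg c
  have hJ : (0 : ℚ) < (Nat.factorial j : ℚ) := by exact_mod_cast (Nat.factorial_pos j)
  have hC : (0 : ℚ) < (Nat.factorial c : ℚ) := by exact_mod_cast (Nat.factorial_pos c)
  have hE : (0 : ℚ) < (Nat.factorial (j + c + 2) : ℚ) := by
    exact_mod_cast (Nat.factorial_pos (j + c + 2))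
  have hB : (0 : ℚ) < (Nat.factorial (2 * j + c + 6) : ℚ) := by
    exact_mod_cast (Nat.factorial_pos (2 * j + c + 6))
  -- factorial expansion facts over ℚ
  have hf1 : ((Nat.factorial (j + 1) : ℚ)) = ((j : ℚ) + 1) * Nat.factorial j := by
    rw [Nat.factorial_succ]; push_cast; ring
  have hf2 : ((Nat.factorial (j + 2) : ℚ)) = ((j : ℚ) + 2) * ((j : ℚ) + 1) * Nat.factorial j := by
    rw [show j + 2 = j + 1 + 1 by ring, Nat.factorial_succ, Nat.factorial_succ]; push_cast; ring
  have hf3 : ((Nat.factorial (c + 2) : ℚ)) = ((c : ℚ) + 2) * ((c : ℚ) + 1) * Nat.factorial c := by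
    rw [show c + 2 = c + 1 + 1 by ring, Nat.factorial_succ, Nat.factorial_succ]; push_cast; ring
  have hf4 : ((Nat.factorial (c + 4) : ℚ)) =
      ((c : ℚ) + 4) * ((c : ℚ) + 3) * ((c : ℚ) + 2) * ((c : ℚ) + 1) * Nat.factorial c := by
    rw [show c + 4 = c + 1 + 1 + 1 + 1 by ring, Nat.factorial_succ, Nat.factorial_succ,
      Nat.factorial_succ, Nat.factorial_succ]; push_cast; ring
  have hf5 : ((Nat.factorial (j + c + 3) : ℚ)) =
      ((j : ℚ) + c + 3) * Nat.factorial (j + c + 2) := by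
    rw [show j + c + 3 = j + c + 2 + 1 by ring, Nat.factorial_succ]; push_cast; ring
  have hf6 : ((Nat.factorial (j + c + 4) : ℚ)) =
      ((j : ℚ) + c + 4) * ((j : ℚ) + c + 3) * Nat.factorial (j + c + 2) := by
    rw [show j + c + 4 = j + c + 2 + 1 + 1 by ring, Nat.factorial_succ, Nat.factorial_succ]
    push_cast; ring
  have hf7 : ((Nat.factorial (j + c + 5) : ℚ)) =
      ((j : ℚ) + c + 5) * ((j : ℚ) + c + 4) * ((j : ℚ) + c + 3) * Nat.factorial (j + c + 2) := by
    rw [show j + c + 5 = j + c + 2 + 1 + 1 + 1 by ring, Nat.factorial_succ, Nat.factorial_succ,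
      Nat.factorial_succ]; push_cast; ring
  have hf8 : ((Nat.factorial (j + c + 6) : ℚ)) =
      ((j : ℚ) + c + 6) * ((j : ℚ) + c + 5) * ((j : ℚ) + c + 4) * ((j : ℚ) + c + 3) *
        Nat.factorial (j + c + 2) := by
    rw [show j + c + 6 = j + c + 2 + 1 + 1 + 1 + 1 by ring, Nat.factorial_succ, Nat.factorial_succ,
      Nat.factorial_succ, Nat.factorial_succ]; push_cast; ring
  set J : ℚ := (Nat.factorial j : ℚ)
  set Cc : ℚ := (Nat.factorial c : ℚ)
  set E : ℚ := (Nat.factorial (j + c + 2) : ℚ)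
  set B : ℚ := (Nat.factorial (2 * j + c + 6) : ℚ)
  have hJ' : J ≠ 0 := ne_of_gt hJ
  have hC' : Cc ≠ 0 := ne_of_gt hC
  have hE' : E ≠ 0 := ne_of_gt hE
  -- closed forms for the three cKL values
  have e1 : cKL (2 * j + c + 6) (j + 1) =
      B / (((j : ℚ) + 2) * ((j : ℚ) + 1) ^ 2 * ((c : ℚ) + 2) * ((c : ℚ) + 1) *
        ((j : ℚ) + c + 4) * ((j : ℚ) + c + 5) * J ^ 2 * Cc) := by
    rw [cKL, show 2 * j + c + 6 - (j + 1) - 2 = j + c + 3 by omega,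
      Nat.cast_choose ℚ (show j + 1 ≤ j + c + 3 by omega),
      Nat.cast_choose ℚ (show j + 1 ≤ 2 * j + c + 6 by omega),
      show j + c + 3 - (j + 1) = c + 2 by omega,
      show 2 * j + c + 6 - (j + 1) = j + c + 5 by omega, hf1, hf3, hf5, hf7]
    push_cast
    have h1 : ((j : ℚ) + 1) ≠ 0 := by positivity
    have h2 : ((j : ℚ) + 2) ≠ 0 := by positivity
    have h3 : ((c : ℚ) + 1) ≠ 0 := by positivity
    have h4 : ((c : ℚ) + 2) ≠ 0 := by positivity
    have h5 : ((j : ℚ) + c + 3) ≠ 0 := by positivity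
    have h6 : ((j : ℚ) + c + 4) ≠ 0 := by positivity
    have h7 : ((j : ℚ) + c + 5) ≠ 0 := by positivity
    field_simp
    ring
  have e2 : cKL (2 * j + c + 6) j =
      B / (((j : ℚ) + 1) * ((c : ℚ) + 4) * ((c : ℚ) + 3) * ((c : ℚ) + 2) * ((c : ℚ) + 1) *
        ((j : ℚ) + c + 6) * ((j : ℚ) + c + 5) * J ^ 2 * Cc) := by
    rw [cKL, show 2 * j + c + 6 - j - 2 = j + c + 4 by omega,
      Nat.cast_choose ℚ (show j ≤ j + c + 4 by omega),
      Nat.cast_choose ℚ (show j ≤ 2 * j + c + 6 by omega),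
      show j + c + 4 - j = c + 4 by omega,
      show 2 * j + c + 6 - j = j + c + 6 by omega, hf4, hf6, hf8]
    push_cast
    have h1 : ((j : ℚ) + 1) ≠ 0 := by positivity
    have h3 : ((c : ℚ) + 1) ≠ 0 := by positivity
    have h4 : ((c : ℚ) + 2) ≠ 0 := by positivity
    have h4' : ((c : ℚ) + 3) ≠ 0 := by positivity
    have h4'' : ((c : ℚ) + 4) ≠ 0 := by positivity
    have h5 : ((j : ℚ) + c + 3) ≠ 0 := by positivity
    have h6 : ((j : ℚ) + c + 4) ≠ 0 := by positivity
    have h7 : ((j : ℚ) + c + 5) ≠ 0 := by positivity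
    have h8 : ((j : ℚ) + c + 6) ≠ 0 := by positivity
    field_simp
    ring
  have e3 : cKL (2 * j + c + 6) (j + 2) =
      B / (((j : ℚ) + 3) * ((j : ℚ) + 2) ^ 2 * ((j : ℚ) + 1) ^ 2 *
        ((j : ℚ) + c + 4) * ((j : ℚ) + c + 3) * J ^ 2 * Cc) := by
    rw [cKL, show 2 * j + c + 6 - (j + 2) - 2 = j + c + 2 by omega,
      Nat.cast_choose ℚ (show j + 2 ≤ j + c + 2 by omega),
      Nat.cast_choose ℚ (show j + 2 ≤ 2 * j + c + 6 by omega),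
      show j + c + 2 - (j + 2) = c by omega,
      show 2 * j + c + 6 - (j + 2) = j + c + 4 by omega, hf2, hf6]
    push_cast
    have h1 : ((j : ℚ) + 1) ≠ 0 := by positivity
    have h2 : ((j : ℚ) + 2) ≠ 0 := by positivity
    have h2' : ((j : ℚ) + 3) ≠ 0 := by positivity
    have h5 : ((j : ℚ) + c + 3) ≠ 0 := by positivity
    have h6 : ((j : ℚ) + c + 4) ≠ 0 := by positivity
    field_simp
    ring
  rw [show (j + 1 : ℕ) - 1 = j by omega, show (j + 1 : ℕ) + 1 = j + 2 by omega, e1, e2, e3]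
  set D1 : ℚ := ((j : ℚ) + 2) * ((j : ℚ) + 1) ^ 2 * ((c : ℚ) + 2) * ((c : ℚ) + 1) *
      ((j : ℚ) + c + 4) * ((j : ℚ) + c + 5) * J ^ 2 * Cc with hD1
  set D2 : ℚ := ((j : ℚ) + 1) * ((c : ℚ) + 4) * ((c : ℚ) + 3) * ((c : ℚ) + 2) * ((c : ℚ) + 1) *
      ((j : ℚ) + c + 6) * ((j : ℚ) + c + 5) * J ^ 2 * Cc with hD2
  set D3 : ℚ := ((j : ℚ) + 3) * ((j : ℚ) + 2) ^ 2 * ((j : ℚ) + 1) ^ 2 *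
      ((j : ℚ) + c + 4) * ((j : ℚ) + c + 3) * J ^ 2 * Cc with hD3
  have hD1p : 0 < D1 := by rw [hD1]; positivity
  have hD2p : 0 < D2 := by rw [hD2]; positivity
  have hD3p : 0 < D3 := by rw [hD3]; positivity
  rw [gt_iff_lt, div_mul_div_comm, div_pow, div_lt_div_iff₀ (mul_pos hD2p hD3p) (pow_pos hD1p 2)]
  have key : ((j : ℚ) + 1) * ((c : ℚ) + 2) * ((c : ℚ) + 1) * ((j : ℚ) + c + 4) *
      ((j : ℚ) + c + 5) < ((j : ℚ) + 3) * ((c : ℚ) + 4) * ((c : ℚ) + 3) *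
      ((j : ℚ) + c + 6) * ((j : ℚ) + c + 3) := by
    nlinarith [mul_nonneg hjq hcq, mul_nonneg (mul_nonneg hjq hjq) hcq,
      mul_nonneg hjq (mul_nonneg hcq hcq), mul_nonneg (mul_nonneg hjq hjq) (mul_nonneg hcq hcq),
      mul_nonneg (mul_nonneg (mul_nonneg hjq hjq) hjq) hcq,
      mul_nonneg hjq (mul_nonneg (mul_nonneg hcq hcq) hcq),
      sq_nonneg ((j:ℚ)), sq_nonneg ((c:ℚ)), sq_nonneg ((j:ℚ)*(c:ℚ))]
  have hS : (0 : ℚ) < ((j : ℚ) + 2) ^ 2 * ((j : ℚ) + 1) ^ 3 * ((c : ℚ) + 2) * ((c : ℚ) + 1) *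
      ((j : ℚ) + c + 4) * ((j : ℚ) + c + 5) * J ^ 4 * Cc ^ 2 * B ^ 2 := by positivity
  calc B * B * D1 ^ 2
      = (((j : ℚ) + 2) ^ 2 * ((j : ℚ) + 1) ^ 3 * ((c : ℚ) + 2) * ((c : ℚ) + 1) *
          ((j : ℚ) + c + 4) * ((j : ℚ) + c + 5) * J ^ 4 * Cc ^ 2 * B ^ 2) *
          (((j : ℚ) + 1) * ((c : ℚ) + 2) * ((c : ℚ) + 1) * ((j : ℚ) + c + 4) *
          ((j : ℚ) + c + 5)) := by rw [hD1]; ring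
    _ < (((j : ℚ) + 2) ^ 2 * ((j : ℚ) + 1) ^ 3 * ((c : ℚ) + 2) * ((c : ℚ) + 1) *
          ((j : ℚ) + c + 4) * ((j : ℚ) + c + 5) * J ^ 4 * Cc ^ 2 * B ^ 2) *
          (((j : ℚ) + 3) * ((c : ℚ) + 4) * ((c : ℚ) + 3) * ((j : ℚ) + c + 6) *
          ((j : ℚ) + c + 3)) := by exact mul_lt_mul_of_pos_left key hS
    _ = B ^ 2 * (D2 * D3) := by rw [hD2, hD3]; ring
end

section
/- The quantity (1/(i+1)) · C(n-i-2, i) · C(n, i) is a nonnegative integer for all integers n ≥ 2 and i ≥ 0; that is, (i+1) divides C(n-i-2, i) · C(n, i). -/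
/-- For all integers `n ≥ 2` and `i ≥ 0`, the quantity
`(1/(i+1)) · C(n-i-2, i) · C(n, i)` is a nonnegative integer; that is,
`(i+1)` divides `C(n-i-2, i) · C(n, i)`. -/
theorem stmt_4 (n i : ℕ) (hn : 2 ≤ n) :
    (i + 1) ∣ Nat.choose (n - i - 2) i * Nat.choose n i := by
  rcases le_or_gt (i + 2) n with h | h
  · -- (i+1) ∣ C(n,i)*(n-i)
    have h1 : (i + 1) ∣ Nat.choose n i * (n - i) := by
      rw [← Nat.choose_succ_right_eq]
      exact Dvd.intro_left _ rfl
    -- (i+1) ∣ (n-i-1)*C(n-i-2,i)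
    have h2 : (i + 1) ∣ (n - i - 1) * Nat.choose (n - i - 2) i := by
      have e : n - i - 1 = Nat.succ (n - i - 2) := by omega
      rw [e, Nat.add_one_mul_choose_eq]
      exact dvd_mul_left _ _
    have h3 : (i + 1) ∣ Nat.choose (n - i - 2) i * (Nat.choose n i * (n - i)) :=
      Dvd.dvd.mul_left h1 _
    have h4 : (i + 1) ∣ (n - i - 1) * Nat.choose (n - i - 2) i * Nat.choose n i :=
      Dvd.dvd.mul_right h2 _
    have key : Nat.choose (n - i - 2) i * Nat.choose n i =
        Nat.choose (n - i - 2) i * (Nat.choose n i * (n - i)) -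
        (n - i - 1) * Nat.choose (n - i - 2) i * Nat.choose n i := by
      have e2 : Nat.choose (n - i - 2) i * (Nat.choose n i * (n - i)) =
          (n - i - 1) * Nat.choose (n - i - 2) i * Nat.choose n i +
          Nat.choose (n - i - 2) i * Nat.choose n i := by
        have e : n - i = (n - i - 1) + 1 := by omega
        generalize Nat.choose (n - i - 2) i = a
        generalize Nat.choose n i = b
        generalize hk : n - i - 1 = k at e ⊢
        rw [e]; ring
      rw [e2, Nat.add_sub_cancel_left]
    rw [key]
    exact Nat.dvd_sub h3 h4
  · have : n - i - 2 = 0 := by omega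
    rw [this]
    have hi : 1 ≤ i := by omega
    rw [Nat.choose_eq_zero_of_lt (by omega), Nat.zero_mul]
    exact dvd_zero _
end

section
/- Let g(t,u) = (2/u) · ((2tu+1)u + sqrt(1 - 2(2tu+1)u + u²) - 1) / (1 - (2tu+1)²), viewed as a formal power series in u with coefficients polynomials in t (or as an analytic function near u = 0). Then g satisfies the functional equation g(t^{-1}, tu) = (tu - u)/((1 - tu + u)(1 + u)) + (1/(1 - tu + u)²) · g(t, u/(1 - tu + u)). -/
/-- The generating function
`g(t,u) = (2/u) · ((2tu+1)u + sqrt(1 - 2(2tu+1)u + u²) - 1) / (1 - (2tu+1)²)`,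
viewed as a real function (`sqrt` is the usual real square root, which agrees with the
branch equal to `1` at `u = 0`). -/
noncomputable def gKL (t u : ℝ) : ℝ :=
  (2 / u) * (((2 * t * u + 1) * u + Real.sqrt (1 - 2 * (2 * t * u + 1) * u + u ^ 2) - 1)
    / (1 - (2 * t * u + 1) ^ 2))

set_option maxHeartbeats 1000000 in
/-- The functional equation
`g(t⁻¹, tu) = (tu - u)/((1 - tu + u)(1 + u)) + (1/(1 - tu + u)²) · g(t, u/(1 - tu + u))`,
as an identity of real functions on a suitable region around `u = 0` (where all the
denominators are nonzero and the radicand is nonnegative). -/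
theorem stmt_7 (t u : ℝ) (ht : t ≠ 0) (hu : u ≠ 0) (hu1 : u ≠ -1)
    (hw : 0 < 1 - t * u + u)
    (hD : 0 ≤ 1 - 2 * t * u - 4 * t * u ^ 2 + t ^ 2 * u ^ 2)
    (hden : 1 - (2 * t * (u / (1 - t * u + u)) + 1) ^ 2 ≠ 0) :
    gKL t⁻¹ (t * u) =
      (t * u - u) / ((1 - t * u + u) * (1 + u)) +
        (1 / (1 - t * u + u) ^ 2) * gKL t (u / (1 - t * u + u)) := by
  have hw0 : (1 - t * u + u) ≠ 0 := ne_of_gt hw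
  have hu1' : (1 : ℝ) + u ≠ 0 := by intro h; apply hu1; linarith
  set s : ℝ := Real.sqrt (1 - 2 * t * u - 4 * t * u ^ 2 + t ^ 2 * u ^ 2) with hsdef
  have hs0 : 0 ≤ s := Real.sqrt_nonneg _
  have hsq : s ^ 2 = 1 - 2 * t * u - 4 * t * u ^ 2 + t ^ 2 * u ^ 2 := Real.sq_sqrt hD
  have h2u : 2 * t⁻¹ * (t * u) = 2 * u := by field_simp
  have harg1 : 1 - 2 * (2 * t⁻¹ * (t * u) + 1) * (t * u) + (t * u) ^ 2
      = 1 - 2 * t * u - 4 * t * u ^ 2 + t ^ 2 * u ^ 2 := by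
    rw [h2u]; ring
  have harg2 : 1 - 2 * (2 * t * (u / (1 - t * u + u)) + 1) * (u / (1 - t * u + u))
      + (u / (1 - t * u + u)) ^ 2 = (s / (1 - t * u + u)) ^ 2 := by
    rw [div_pow s, hsq]
    field_simp
    ring
  have hsw : Real.sqrt (1 - 2 * (2 * t * (u / (1 - t * u + u)) + 1) * (u / (1 - t * u + u))
      + (u / (1 - t * u + u)) ^ 2) = s / (1 - t * u + u) := by
    rw [harg2, Real.sqrt_sq (by positivity)]
  have hden1 : 1 - (2 * u + 1) ^ 2 ≠ 0 := by
    intro h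
    have h1 : u * (1 + u) = 0 := by nlinarith
    rcases mul_eq_zero.mp h1 with h2 | h2
    · exact hu h2
    · exact hu1' h2
  have hgden : 1 - (2 * t * (u / (1 - t * u + u)) + 1) ^ 2
      = -4 * t * u * (1 + u) / (1 - t * u + u) ^ 2 := by
    field_simp
    ring
  have hld : 1 - (2 * u + 1) ^ 2 = -(4 * u * (1 + u)) := by ring
  unfold gKL
  rw [harg1, ← hsdef, hsw, h2u, hgden, hld]
  have htu : t * u ≠ 0 := mul_ne_zero ht hu
  field_simp
  ring
end

section
/- Let f(t,u) = Σ_{n≥3, i≥0} d(n,i) t^i u^{n-1}, where d(n,i) is the number of sets of i pairwise non-crossing diagonals of a convex n-gon. Then (Beckwith) f(t,u) = 2·((2t+1)u + sqrt(1 - 2(2t+1)u + u²) - 1) / (1 - (2t+1)²) as formal power series, equivalently F = f satisfies the quadratic equation (t(t+1))·F² + ((2t+1)u - 1)·F + u² = 0 together with F = u² + O(u³). -/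
/-- A diagonal of a convex `n`-gon with vertices `0, 1, …, n-1` (in cyclic order),
encoded as an ordered pair `(p.1, p.2)` with `p.1 < p.2`: the two endpoints must be
non-adjacent in the cyclic order. -/
def IsDiagonal (n : ℕ) (p : Fin n × Fin n) : Prop :=
  p.1 < p.2 ∧ (p.2 : ℕ) ≠ (p.1 : ℕ) + 1 ∧ ¬((p.1 : ℕ) = 0 ∧ (p.2 : ℕ) = n - 1)

/-- Two diagonals `{a,b}` and `{c,d}` (with `a < b`, `c < d`) of a convex polygon cross
(intersect in the interior) iff exactly one of `c, d` lies strictly between `a` and `b`. -/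
def Crosses {n : ℕ} (p q : Fin n × Fin n) : Prop :=
  (p.1 < q.1 ∧ q.1 < p.2 ∧ p.2 < q.2) ∨ (q.1 < p.1 ∧ p.1 < q.2 ∧ q.2 < p.2)

/-- `d(n,i)`: the number of sets of `i` pairwise non-crossing diagonals of a convex
`n`-gon. -/
noncomputable def numNonCrossing (n i : ℕ) : ℕ :=
  Nat.card {S : Finset (Fin n × Fin n) //
    S.card = i ∧ (∀ p ∈ S, IsDiagonal n p) ∧ ∀ p ∈ S, ∀ q ∈ S, ¬ Crosses p q}

namespace Stmt8

def NDiag (n : ℕ) (p : ℕ × ℕ) : Prop :=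
  p.1 < p.2 ∧ p.2 < n ∧ p.2 ≠ p.1 + 1 ∧ ¬(p.1 = 0 ∧ p.2 = n - 1)

def NTop (n : ℕ) (p : ℕ × ℕ) : Prop :=
  p.1 < p.2 ∧ p.2 < n ∧ p.2 ≠ p.1 + 1

def NCross (p q : ℕ × ℕ) : Prop :=
  (p.1 < q.1 ∧ q.1 < p.2 ∧ p.2 < q.2) ∨ (q.1 < p.1 ∧ p.1 < q.2 ∧ q.2 < p.2)

instance (n : ℕ) (p : ℕ × ℕ) : Decidable (NDiag n p) := by unfold NDiag; infer_instance
instance (n : ℕ) (p : ℕ × ℕ) : Decidable (NTop n p) := by unfold NTop; infer_instance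
instance (p q : ℕ × ℕ) : Decidable (NCross p q) := by unfold NCross; infer_instance

def NC (S : Finset (ℕ × ℕ)) : Prop := ∀ p ∈ S, ∀ q ∈ S, ¬ NCross p q

instance (S : Finset (ℕ × ℕ)) : Decidable (NC S) := by unfold NC; infer_instance

def DAll (n : ℕ) : Finset (Finset (ℕ × ℕ)) :=
  ((Finset.range n ×ˢ Finset.range n).powerset).filter
    (fun S => (∀ p ∈ S, NDiag n p) ∧ NC S)

def DTop (n : ℕ) : Finset (Finset (ℕ × ℕ)) :=
  ((Finset.range n ×ˢ Finset.range n).powerset).filter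
    (fun S => (∀ p ∈ S, NTop n p) ∧ NC S)

lemma mem_DAll {n : ℕ} {S : Finset (ℕ × ℕ)} :
    S ∈ DAll n ↔ (∀ p ∈ S, NDiag n p) ∧ NC S := by
  simp only [DAll, Finset.mem_filter, Finset.mem_powerset, and_iff_right_iff_imp]
  rintro ⟨hd, -⟩ p hp
  have h := hd p hp
  exact Finset.mem_product.2 ⟨Finset.mem_range.2 (h.1.trans h.2.1), Finset.mem_range.2 h.2.1⟩

lemma mem_DTop {n : ℕ} {S : Finset (ℕ × ℕ)} :
    S ∈ DTop n ↔ (∀ p ∈ S, NTop n p) ∧ NC S := by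
  simp only [DTop, Finset.mem_filter, Finset.mem_powerset, and_iff_right_iff_imp]
  rintro ⟨hd, -⟩ p hp
  have h := hd p hp
  exact Finset.mem_product.2 ⟨Finset.mem_range.2 (h.1.trans h.2.1), Finset.mem_range.2 h.2.1⟩

lemma not_NTop_two {n : ℕ} (hn : n ≤ 2) (p : ℕ × ℕ) : ¬ NTop n p := by
  rintro ⟨h1, h2, h3⟩
  omega

lemma not_NDiag_three {n : ℕ} (hn : n ≤ 3) (p : ℕ × ℕ) : ¬ NDiag n p := by
  rintro ⟨h1, h2, h3, h4⟩
  omega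

lemma DAll_small {n : ℕ} (hn : n ≤ 3) : DAll n = {∅} := by
  ext S
  simp only [mem_DAll, Finset.mem_singleton]
  constructor
  · rintro ⟨hd, -⟩
    rw [Finset.eq_empty_iff_forall_notMem]
    exact fun p hp => not_NDiag_three hn p (hd p hp)
  · rintro rfl
    exact ⟨by simp, by simp [NC]⟩

lemma DTop_small {n : ℕ} (hn : n ≤ 2) : DTop n = {∅} := by
  ext S
  simp only [mem_DTop, Finset.mem_singleton]
  constructor
  · rintro ⟨hd, -⟩
    rw [Finset.eq_empty_iff_forall_notMem]
    exact fun p hp => not_NTop_two hn p (hd p hp)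
  · rintro rfl
    exact ⟨by simp, by simp [NC]⟩

open Polynomial in
noncomputable def P (n : ℕ) : Polynomial ℚ := ∑ S ∈ DAll n, X ^ S.card

open Polynomial in
noncomputable def Q (n : ℕ) : Polynomial ℚ := ∑ S ∈ DTop n, X ^ S.card

lemma P_small {n : ℕ} (hn : n ≤ 3) : P n = 1 := by
  simp [P, DAll_small hn]

lemma Q_two : Q 2 = 1 := by simp [Q, DTop_small le_rfl]

end Stmt8

namespace Stmt8

def Blk (S : Finset (ℕ × ℕ)) (v : ℕ) : Prop := ∃ p ∈ S, p.1 < v ∧ v < p.2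

instance (S : Finset (ℕ × ℕ)) (v : ℕ) : Decidable (Blk S v) := by
  unfold Blk; infer_instance

lemma keyDiag {S : Finset (ℕ × ℕ)} (hlt : ∀ p ∈ S, p.1 < p.2) (hc : NC S)
    {m : ℕ} (hm : 2 ≤ m) (hvis : ¬ Blk S m)
    (hblk : ∀ w, 1 ≤ w → w < m → Blk S w) : (0, m) ∈ S := by
  classical
  set T := S.filter (fun p => p.1 = 0 ∧ p.2 ≤ m) with hT
  have hTne : (T.image Prod.snd).Nonempty := by
    obtain ⟨p, hp, h1, h2⟩ := hblk 1 le_rfl (by omega)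
    have hp1 : p.1 = 0 := by omega
    have hp2 : p.2 ≤ m := by
      by_contra h
      exact hvis ⟨p, hp, by omega⟩
    exact ⟨p.2, Finset.mem_image.2 ⟨p, Finset.mem_filter.2 ⟨hp, hp1, hp2⟩, rfl⟩⟩
  set b := (T.image Prod.snd).max' hTne with hb
  have hbmem := (T.image Prod.snd).max'_mem hTne
  obtain ⟨p, hpT, hpb⟩ := Finset.mem_image.1 hbmem
  obtain ⟨hpS, hp0, hpm⟩ := Finset.mem_filter.1 hpT
  have hblt : p.1 < p.2 := hlt p hpS
  have hbm : p.2 = m := by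
    by_contra hne
    obtain ⟨q, hqS, hq1, hq2⟩ := hblk p.2 (by omega) (by omega)
    have hq2m : q.2 ≤ m := by
      by_contra h
      exact hvis ⟨q, hqS, by omega⟩
    have hq10 : q.1 = 0 := by
      by_contra h
      exact hc p hpS q hqS (Or.inl (by omega))
    have hqle : q.2 ≤ (T.image Prod.snd).max' hTne := Finset.le_max' _ _
      (Finset.mem_image.2 ⟨q, Finset.mem_filter.2 ⟨hqS, hq10, hq2m⟩, rfl⟩)
    omega
  have hpe : p = (0, m) := by rw [Prod.ext_iff]; exact ⟨hp0, hbm⟩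
  exact hpe ▸ hpS

lemma fv_ex (S : Finset (ℕ × ℕ)) : ∃ v, 1 ≤ v ∧ ¬ Blk S v := by
  refine ⟨S.sup Prod.snd + 1, by omega, ?_⟩
  rintro ⟨p, hp, h1, h2⟩
  have := Finset.le_sup (f := Prod.snd) hp
  omega

noncomputable def fv (S : Finset (ℕ × ℕ)) : ℕ := Nat.find (fv_ex S)

lemma fv_eq {S : Finset (ℕ × ℕ)} {m : ℕ}
    (h1 : 1 ≤ m) (h2 : ¬ Blk S m) (h3 : ∀ w, 1 ≤ w → w < m → Blk S w) :
    fv S = m := by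
  refine le_antisymm (Nat.find_le ⟨h1, h2⟩) ((Nat.le_find_iff _ _).2 ?_)
  rintro w hw ⟨hw1, hw2⟩
  exact hw2 (h3 w hw1 hw)

lemma fv_spec (S : Finset (ℕ × ℕ)) :
    1 ≤ fv S ∧ ¬ Blk S (fv S) ∧ ∀ w, 1 ≤ w → w < fv S → Blk S w := by
  refine ⟨(Nat.find_spec (fv_ex S)).1, (Nat.find_spec (fv_ex S)).2, fun w hw1 hw2 => ?_⟩
  have := Nat.find_min (fv_ex S) hw2
  simp only [not_and, not_not] at this
  exact this hw1

lemma fv_mem_Icc {n : ℕ} (hn : 4 ≤ n) {S : Finset (ℕ × ℕ)} (hS : S ∈ DAll n) :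
    fv S ∈ Finset.Icc 1 (n - 2) := by
  obtain ⟨h1, h2, h3⟩ := fv_spec S
  obtain ⟨hd, hc⟩ := mem_DAll.1 hS
  have hle : fv S ≤ n - 1 := by
    refine Nat.find_le ⟨by omega, ?_⟩
    rintro ⟨p, hp, ha, hb⟩
    have := hd p hp
    unfold NDiag at this
    omega
  rw [Finset.mem_Icc]
  refine ⟨h1, ?_⟩
  by_contra hgt
  have hfv : fv S = n - 1 := by omega
  have : (0, n - 1) ∈ S := by
    refine keyDiag (fun p hp => (hd p hp).1) hc (by omega) (hfv ▸ h2) ?_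
    intro w hw1 hw2
    exact h3 w hw1 (by omega)
  exact (hd _ this).2.2.2 ⟨rfl, rfl⟩
end Stmt8

namespace Stmt8
open Polynomial

lemma not_cross_close {k : ℕ} {p : ℕ × ℕ} (h1 : p.1 < p.2) (h2 : p.2 < k) :
    ¬ NCross (0, k-1) p ∧ ¬ NCross p (0, k-1) := by
  constructor <;> rintro (⟨a,b,c⟩|⟨a,b,c⟩) <;> simp at a b c <;> omega

lemma Q_eq {k : ℕ} (hk : 3 ≤ k) : Q k = (1 + X) * P k := by
  classical
  have hsplit := Finset.sum_filter_add_sum_filter_not (DTop k)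
    (fun S => (0, k-1) ∉ S) (fun S => (X : Polynomial ℚ) ^ S.card)
  have h1 : (DTop k).filter (fun S => (0, k-1) ∉ S) = DAll k := by
    ext S
    simp only [Finset.mem_filter, mem_DTop, mem_DAll]
    constructor
    · rintro ⟨⟨hd, hc⟩, hnm⟩
      refine ⟨fun p hp => ⟨(hd p hp).1, (hd p hp).2.1, (hd p hp).2.2, ?_⟩, hc⟩
      rintro ⟨e1, e2⟩
      exact hnm (by rwa [show p = (0, k-1) by ext <;> simp [e1, e2]] at hp)
    · rintro ⟨hd, hc⟩
      refine ⟨⟨fun p hp => ⟨(hd p hp).1, (hd p hp).2.1, (hd p hp).2.2.1⟩, hc⟩, fun hm => ?_⟩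
      exact (hd _ hm).2.2.2 ⟨rfl, rfl⟩
  have h2 : ∑ S ∈ (DTop k).filter (fun S => ¬ (0, k-1) ∉ S), (X : Polynomial ℚ) ^ S.card
      = X * P k := by
    rw [P, Finset.mul_sum]
    refine Finset.sum_nbij' (fun S => S.erase (0, k-1)) (fun S => insert (0, k-1) S)
      ?_ ?_ ?_ ?_ ?_
    · intro S hS
      simp only [Finset.mem_filter, mem_DTop, not_not] at hS
      obtain ⟨⟨hd, hc⟩, hm⟩ := hS
      rw [mem_DAll]
      refine ⟨fun p hp => ?_, fun p hp q hq => hc p (Finset.mem_of_mem_erase hp) q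
        (Finset.mem_of_mem_erase hq)⟩
      have hp' := Finset.mem_of_mem_erase hp
      have hne := Finset.ne_of_mem_erase hp
      have h := hd p hp'
      exact ⟨h.1, h.2.1, h.2.2, fun ⟨e1, e2⟩ => hne (by ext <;> simp [e1, e2])⟩
    · intro S hS
      rw [mem_DAll] at hS
      obtain ⟨hd, hc⟩ := hS
      simp only [Finset.mem_filter, mem_DTop, not_not]
      refine ⟨⟨fun p hp => ?_, fun p hp q hq => ?_⟩, Finset.mem_insert_self _ _⟩
      · rcases Finset.mem_insert.1 hp with rfl | hp
        · exact ⟨by simp; omega, by simp; omega, by simp; omega⟩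
        · exact ⟨(hd p hp).1, (hd p hp).2.1, (hd p hp).2.2.1⟩
      · rcases Finset.mem_insert.1 hp with rfl | hp <;>
          rcases Finset.mem_insert.1 hq with rfl | hq
        · rintro (⟨a,b,c⟩|⟨a,b,c⟩) <;> omega
        · exact (not_cross_close (hd q hq).1 (hd q hq).2.1).1
        · exact (not_cross_close (hd p hp).1 (hd p hp).2.1).2
        · exact hc p hp q hq
    · intro S hS
      simp only [Finset.mem_filter, not_not] at hS
      exact Finset.insert_erase hS.2
    · intro S hS
      rw [mem_DAll] at hS
      refine Finset.erase_insert (fun hm => ?_)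
      exact (hS.1 _ hm).2.2.2 ⟨rfl, rfl⟩
    · intro S hS
      simp only [Finset.mem_filter, not_not] at hS
      rw [Finset.card_erase_of_mem hS.2, ← pow_succ']
      congr 1
      have := Finset.card_pos.2 ⟨_, hS.2⟩
      omega
  rw [Q, ← hsplit, h1, h2, P, add_mul, one_mul]

end Stmt8

namespace Stmt8
open Polynomial

def upf (m : ℕ) (p : ℕ × ℕ) : ℕ × ℕ := (p.1 + m, p.2 + m)
def dnf (m : ℕ) (p : ℕ × ℕ) : ℕ × ℕ := (p.1 - m, p.2 - m)

def lowerS (m : ℕ) (S : Finset (ℕ × ℕ)) : Finset (ℕ × ℕ) :=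
  (S.filter (fun p => p.2 ≤ m)).erase (0, m)

def upperS (m : ℕ) (S : Finset (ℕ × ℕ)) : Finset (ℕ × ℕ) :=
  (S.filter (fun p => m ≤ p.1)).image (dnf m)

def bwdS (m : ℕ) (x : Finset (ℕ × ℕ) × Finset (ℕ × ℕ)) : Finset (ℕ × ℕ) :=
  (if 2 ≤ m then insert (0, m) x.1 else x.1) ∪ x.2.image (upf m)

lemma fiber_eq {n m : ℕ} (hn : 4 ≤ n) (hm1 : 1 ≤ m) (hm2 : m ≤ n - 2) :
    ∑ S ∈ (DAll n).filter (fun S => fv S = m), (X : Polynomial ℚ) ^ S.card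
      = X ^ (if 2 ≤ m then 1 else 0) * (P (m + 1) * Q (n - m)) := by
  classical
  set e : ℕ := if 2 ≤ m then 1 else 0 with he
  have hprod : ∑ x ∈ (DAll (m+1)) ×ˢ (DTop (n-m)),
      (X : Polynomial ℚ) ^ (e + x.1.card + x.2.card)
      = X ^ e * (P (m + 1) * Q (n - m)) := by
    rw [P, Q, Finset.sum_mul_sum, Finset.mul_sum, Finset.sum_product]
    refine Finset.sum_congr rfl fun a _ => ?_
    rw [Finset.mul_sum]
    refine Finset.sum_congr rfl fun b _ => ?_
    rw [pow_add, pow_add, mul_assoc]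
  rw [← hprod]
  refine Finset.sum_nbij' (fun S => (lowerS m S, upperS m S)) (bwdS m) ?_ ?_ ?_ ?_ ?_
  · -- forward maps into product
    intro S hS
    rw [Finset.mem_filter] at hS
    obtain ⟨hSD, hfvS⟩ := hS
    obtain ⟨hd, hc⟩ := mem_DAll.1 hSD
    have hvis : ¬ Blk S m := hfvS ▸ (fv_spec S).2.1
    have hsplit : ∀ p ∈ S, p.2 ≤ m ∨ m ≤ p.1 := by
      intro p hp
      by_contra h
      exact hvis ⟨p, hp, by omega⟩
    rw [Finset.mem_product]
    constructor
    · rw [mem_DAll]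
      constructor
      · intro p hp
        simp only [lowerS, Finset.mem_erase, Finset.mem_filter] at hp
        obtain ⟨hne, hpS, hpm⟩ := hp
        have h := hd p hpS
        refine ⟨h.1, by omega, h.2.2.1, ?_⟩
        rintro ⟨e1, e2⟩
        exact hne (by rw [Prod.ext_iff]; exact ⟨e1, by omega⟩)
      · intro p hp q hq
        simp only [lowerS, Finset.mem_erase, Finset.mem_filter] at hp hq
        exact hc p hp.2.1 q hq.2.1
    · rw [mem_DTop]
      constructor
      · intro p hp
        simp only [upperS, Finset.mem_image] at hp
        obtain ⟨q, hq, rfl⟩ := hp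
        rw [Finset.mem_filter] at hq
        have h := hd q hq.1
        have hq1 := hq.2
        unfold NDiag at h
        unfold dnf
        refine ⟨by omega, by omega, by omega⟩
      · intro p hp q hq
        simp only [upperS, Finset.mem_image] at hp hq
        obtain ⟨p', hp', rfl⟩ := hp
        obtain ⟨q', hq', rfl⟩ := hq
        rw [Finset.mem_filter] at hp' hq'
        have h1 := (hd p' hp'.1).1
        have h2 := (hd q' hq'.1).1
        have hm1' := hp'.2
        have hm2' := hq'.2
        unfold dnf
        rintro (⟨a, b, c⟩ | ⟨a, b, c⟩)
        · exact hc p' hp'.1 q' hq'.1 (Or.inl ⟨by omega, by omega, by omega⟩)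
        · exact hc p' hp'.1 q' hq'.1 (Or.inr ⟨by omega, by omega, by omega⟩)
  · -- backward maps into fiber
    rintro ⟨S₁, S₂⟩ hx
    rw [Finset.mem_product] at hx
    obtain ⟨h1, h2⟩ := hx
    obtain ⟨hd1, hc1⟩ := mem_DAll.1 h1
    obtain ⟨hd2, hc2⟩ := mem_DTop.1 h2
    have hnm : 2 ≤ n - m := by omega
    -- membership characterization
    have hmem : ∀ p, p ∈ bwdS m (S₁, S₂) ↔
        ((2 ≤ m ∧ p = (0, m)) ∨ p ∈ S₁ ∨ ∃ q ∈ S₂, upf m q = p) := by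
      intro p
      rw [bwdS, Finset.mem_union, Finset.mem_image]
      by_cases h2m : 2 ≤ m
      · simp [h2m, Finset.mem_insert, or_assoc, eq_comm]
      · simp [h2m]
    have hfacts : ∀ p ∈ bwdS m (S₁, S₂), NDiag n p ∧ (p.2 ≤ m ∨ (m ≤ p.1 ∧ m + 1 ≤ p.2)) := by
      intro p hp
      rcases (hmem p).1 hp with ⟨h2m, rfl⟩ | hp1 | ⟨q, hq, rfl⟩
      · exact ⟨⟨by omega, by omega, by omega, by simp; omega⟩, by simp⟩
      · have h := hd1 p hp1
        unfold NDiag at h ⊢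
        refine ⟨⟨h.1, by omega, h.2.2.1, by omega⟩, by omega⟩
      · have h := hd2 q hq
        unfold NTop at h
        unfold upf
        refine ⟨⟨by omega, by omega, by omega, by simp; omega⟩, by simp; omega⟩
    rw [Finset.mem_filter]
    constructor
    · rw [mem_DAll]
      refine ⟨fun p hp => (hfacts p hp).1, ?_⟩
      intro p hp q hq
      rcases (hmem p).1 hp with ⟨h2m, rfl⟩ | hp1 | ⟨p', hp', rfl⟩ <;>
        rcases (hmem q).1 hq with ⟨h2m', rfl⟩ | hq1 | ⟨q', hq', rfl⟩
      · rintro (⟨a, b, c⟩ | ⟨a, b, c⟩) <;> omega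
      · have h := hd1 q hq1
        unfold NDiag at h
        rintro (⟨a, b, c⟩ | ⟨a, b, c⟩) <;> simp at a b c <;> omega
      · have h := hd2 q' hq'
        unfold NTop at h
        unfold upf
        rintro (⟨a, b, c⟩ | ⟨a, b, c⟩) <;> simp at a b c <;> omega
      · have h := hd1 p hp1
        unfold NDiag at h
        rintro (⟨a, b, c⟩ | ⟨a, b, c⟩) <;> simp at a b c <;> omega
      · exact hc1 p hp1 q hq1
      · have h := hd1 p hp1
        have h' := hd2 q' hq'
        unfold NDiag at h
        unfold NTop at h'
        unfold upf
        rintro (⟨a, b, c⟩ | ⟨a, b, c⟩) <;> simp at a b c <;> omega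
      · have h := hd2 p' hp'
        unfold NTop at h
        unfold upf
        rintro (⟨a, b, c⟩ | ⟨a, b, c⟩) <;> simp at a b c <;> omega
      · have h := hd2 p' hp'
        have h' := hd1 q hq1
        unfold NTop at h
        unfold NDiag at h'
        unfold upf
        rintro (⟨a, b, c⟩ | ⟨a, b, c⟩) <;> simp at a b c <;> omega
      · unfold upf
        rintro (⟨a, b, c⟩ | ⟨a, b, c⟩)
        · exact hc2 p' hp' q' hq' (Or.inl ⟨by omega, by omega, by omega⟩)
        · exact hc2 p' hp' q' hq' (Or.inr ⟨by omega, by omega, by omega⟩)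
    · -- fv = m
      refine fv_eq hm1 ?_ ?_
      · rintro ⟨p, hp, ha, hb⟩
        rcases (hfacts p hp).2 with h | h <;> omega
      · intro w hw1 hw2
        have h2m : 2 ≤ m := by omega
        refine ⟨(0, m), (hmem _).2 (Or.inl ⟨h2m, rfl⟩), by simp; omega⟩
  · -- left inverse : bwd (fwd S) = S
    intro S hS
    rw [Finset.mem_filter] at hS
    obtain ⟨hSD, hfvS⟩ := hS
    obtain ⟨hd, hc⟩ := mem_DAll.1 hSD
    have hvis : ¬ Blk S m := hfvS ▸ (fv_spec S).2.1
    have hsplit : ∀ p ∈ S, p.2 ≤ m ∨ m ≤ p.1 := by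
      intro p hp
      by_contra h
      exact hvis ⟨p, hp, by omega⟩
    have hsnd : ∀ p ∈ S, 2 ≤ p.2 := by
      intro p hp
      have h := hd p hp
      unfold NDiag at h
      omega
    have himg : (upperS m S).image (upf m) = S.filter (fun p => m ≤ p.1) := by
      rw [upperS, Finset.image_image]
      have heq : ∀ p ∈ S.filter (fun p => m ≤ p.1), (upf m ∘ dnf m) p = id p := by
        intro p hp
        rw [Finset.mem_filter] at hp
        have h1 := (hd p hp.1).1
        have h2 := hp.2
        simp only [Function.comp_apply, upf, dnf, id_eq, Prod.ext_iff]
        constructor <;> omega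
      rw [Finset.image_congr heq, Finset.image_id]
    show bwdS m (lowerS m S, upperS m S) = S
    rw [bwdS]
    simp only
    rw [himg]
    by_cases h2m : 2 ≤ m
    · have h0m : (0, m) ∈ S := by
        refine keyDiag (fun p hp => (hd p hp).1) hc h2m hvis ?_
        intro w hw1 hw2
        exact (hfvS ▸ (fv_spec S).2.2) w hw1 (by omega)
      have h0f : (0, m) ∈ S.filter (fun p : ℕ × ℕ => p.2 ≤ m) :=
        Finset.mem_filter.2 ⟨h0m, le_rfl⟩
      rw [if_pos h2m, lowerS, Finset.insert_erase h0f]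
      ext p
      simp only [Finset.mem_union, Finset.mem_filter]
      constructor
      · rintro (⟨h, -⟩ | ⟨h, -⟩) <;> exact h
      · intro hp
        rcases hsplit p hp with h | h
        · exact Or.inl ⟨hp, h⟩
        · exact Or.inr ⟨hp, h⟩
    · have hm1' : m = 1 := by omega
      rw [if_neg h2m, lowerS]
      have hempty : S.filter (fun p => p.2 ≤ m) = ∅ := by
        rw [Finset.filter_eq_empty_iff]
        intro p hp
        have := hsnd p hp
        omega
      rw [hempty]
      have : S.filter (fun p => m ≤ p.1) = S := by
        rw [Finset.filter_eq_self]
        intro p hp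
        rcases hsplit p hp with h | h
        · have := hsnd p hp; omega
        · exact h
      rw [this]
      simp
  · -- right inverse : fwd (bwd x) = x
    rintro ⟨S₁, S₂⟩ hx
    rw [Finset.mem_product] at hx
    obtain ⟨h1, h2⟩ := hx
    obtain ⟨hd1, hc1⟩ := mem_DAll.1 h1
    obtain ⟨hd2, hc2⟩ := mem_DTop.1 h2
    have key1 : (bwdS m (S₁, S₂)).filter (fun p => p.2 ≤ m)
        = (if 2 ≤ m then insert (0, m) S₁ else S₁) := by
      ext p
      rw [Finset.mem_filter, bwdS]
      simp only [Finset.mem_union, Finset.mem_image]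
      constructor
      · rintro ⟨hbase | ⟨q, hq, rfl⟩, hpm⟩
        · exact hbase
        · have h := hd2 q hq
          unfold NTop at h
          unfold upf at hpm
          simp at hpm
          omega
      · intro hbase
        refine ⟨Or.inl hbase, ?_⟩
        by_cases h2m : 2 ≤ m
        · rw [if_pos h2m, Finset.mem_insert] at hbase
          rcases hbase with rfl | hp1
          · simp
          · have := (hd1 p hp1).2.1; omega
        · rw [if_neg h2m] at hbase
          have := (hd1 p hbase).2.1; omega
    have key2 : (bwdS m (S₁, S₂)).filter (fun p => m ≤ p.1) = S₂.image (upf m) := by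
      ext p
      rw [Finset.mem_filter, bwdS]
      simp only [Finset.mem_union, Finset.mem_image]
      constructor
      · rintro ⟨hbase | himg, hpm⟩
        · exfalso
          by_cases h2m : 2 ≤ m
          · rw [if_pos h2m, Finset.mem_insert] at hbase
            rcases hbase with rfl | hp1
            · simp at hpm; omega
            · have := (hd1 p hp1).1
              have := (hd1 p hp1).2.1
              omega
          · rw [if_neg h2m] at hbase
            have := (hd1 p hbase).1
            have := (hd1 p hbase).2.1
            omega
        · exact himg
      · rintro ⟨q, hq, rfl⟩
        exact ⟨Or.inr ⟨q, hq, rfl⟩, by unfold upf; simp⟩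
    have e1 : lowerS m (bwdS m (S₁, S₂)) = S₁ := by
      rw [lowerS, key1]
      by_cases h2m : 2 ≤ m
      · rw [if_pos h2m, Finset.erase_insert]
        intro hmem
        exact (hd1 _ hmem).2.2.2 ⟨rfl, by simp⟩
      · rw [if_neg h2m]
        refine Finset.erase_eq_of_notMem ?_
        intro hmem
        have := (hd1 _ hmem).2.2.1
        simp at this
        omega
    have e2 : upperS m (bwdS m (S₁, S₂)) = S₂ := by
      rw [upperS, key2, Finset.image_image]
      have heq : ∀ p ∈ S₂, (dnf m ∘ upf m) p = id p := by
        intro p hp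
        simp only [Function.comp_apply, dnf, upf, id_eq, Prod.ext_iff]
        constructor <;> simp
      rw [Finset.image_congr heq, Finset.image_id]
    show (lowerS m (bwdS m (S₁, S₂)), upperS m (bwdS m (S₁, S₂))) = (S₁, S₂)
    rw [e1, e2]
  · -- weights
    intro S hS
    rw [Finset.mem_filter] at hS
    obtain ⟨hSD, hfvS⟩ := hS
    obtain ⟨hd, hc⟩ := mem_DAll.1 hSD
    have hvis : ¬ Blk S m := hfvS ▸ (fv_spec S).2.1
    have hsplit : ∀ p ∈ S, p.2 ≤ m ∨ m ≤ p.1 := by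
      intro p hp
      by_contra h
      exact hvis ⟨p, hp, by omega⟩
    have hsnd : ∀ p ∈ S, 2 ≤ p.2 := by
      intro p hp
      have h := hd p hp
      unfold NDiag at h
      omega
    show (X : Polynomial ℚ) ^ S.card = X ^ (e + (lowerS m S).card + (upperS m S).card)
    congr 1
    have hcards : S.card = (S.filter (fun p => p.2 ≤ m)).card
        + (S.filter (fun p => m ≤ p.1)).card := by
      rw [← Finset.card_filter_add_card_filter_not (p := fun p => p.2 ≤ m)]
      congr 1
      have : S.filter (fun a => ¬ a.2 ≤ m) = S.filter (fun p => m ≤ p.1) := by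
        apply Finset.filter_congr
        intro p hp
        have := (hd p hp).1
        rcases hsplit p hp with h | h <;> simp <;> omega
      rw [this]
    have hcard2 : (upperS m S).card = (S.filter (fun p => m ≤ p.1)).card := by
      rw [upperS]
      apply Finset.card_image_of_injOn
      intro p hp q hq heq
      rw [Finset.mem_coe, Finset.mem_filter] at hp hq
      have := (hd p hp.1).1
      have := (hd q hq.1).1
      have hp2 := hp.2
      have hq2 := hq.2
      unfold dnf at heq
      rw [Prod.ext_iff] at heq ⊢
      simp at heq
      omega
    by_cases h2m : 2 ≤ m
    · have h0m : (0, m) ∈ S := by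
        refine keyDiag (fun p hp => (hd p hp).1) hc h2m hvis ?_
        intro w hw1 hw2
        exact (hfvS ▸ (fv_spec S).2.2) w hw1 (by omega)
      have h0f : (0, m) ∈ S.filter (fun p : ℕ × ℕ => p.2 ≤ m) :=
        Finset.mem_filter.2 ⟨h0m, le_rfl⟩
      have hcard1 : (lowerS m S).card + 1 = (S.filter (fun p => p.2 ≤ m)).card := by
        rw [lowerS, Finset.card_erase_of_mem h0f]
        have : 0 < (S.filter (fun p => p.2 ≤ m)).card := Finset.card_pos.2 ⟨(0, m), h0f⟩
        omega
      rw [he, if_pos h2m]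
      omega
    · have hempty : S.filter (fun p => p.2 ≤ m) = ∅ := by
        rw [Finset.filter_eq_empty_iff]
        intro p hp
        have := hsnd p hp
        omega
      have hcard1 : (lowerS m S).card = 0 := by
        rw [lowerS, hempty]
        simp
      rw [he, if_neg h2m]
      rw [hempty] at hcards
      simp at hcards
      omega
end Stmt8

namespace Stmt8
open Polynomial

lemma P_rec {n : ℕ} (hn : 4 ≤ n) :
    P n = ∑ m ∈ Finset.Icc 1 (n - 2),
      (X : Polynomial ℚ) ^ (if 2 ≤ m then 1 else 0) * (P (m + 1) * Q (n - m)) := by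
  classical
  rw [P, ← Finset.sum_fiberwise_of_maps_to (fun S hS => fv_mem_Icc hn hS)
    (fun S => (X : Polynomial ℚ) ^ S.card)]
  refine Finset.sum_congr rfl fun m hm => ?_
  rw [Finset.mem_Icc] at hm
  exact fiber_eq hn hm.1 hm.2

lemma P_rec' {m : ℕ} (hm : 3 ≤ m) :
    P (m + 1) = (2 * X + 1) * P m
      + (X ^ 2 + X) * ∑ a ∈ Finset.Icc 2 (m - 2), P (a + 1) * P (m - a + 1) := by
  classical
  have h1 : Finset.Icc 1 (m + 1 - 2) = insert 1 (insert (m - 1) (Finset.Icc 2 (m - 2))) := by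
    ext v
    simp only [Finset.mem_Icc, Finset.mem_insert]
    omega
  rw [P_rec (show 4 ≤ m + 1 by omega), h1, Finset.sum_insert, Finset.sum_insert]
  · have hq2 : m + 1 - (m - 1) = 2 := by omega
    have hs : ∑ a ∈ Finset.Icc 2 (m - 2),
        (X : Polynomial ℚ) ^ (if 2 ≤ a then 1 else 0) * (P (a + 1) * Q (m + 1 - a))
        = (X ^ 2 + X) * ∑ a ∈ Finset.Icc 2 (m - 2), P (a + 1) * P (m - a + 1) := by
      rw [Finset.mul_sum]
      refine Finset.sum_congr rfl fun a ha => ?_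
      rw [Finset.mem_Icc] at ha
      rw [if_pos ha.1, Q_eq (show 3 ≤ m + 1 - a by omega), show m + 1 - a = m - a + 1 by omega,
        pow_one]
      ring
    rw [hs, if_neg (by omega : ¬ 2 ≤ 1), if_pos (by omega : 2 ≤ m - 1), hq2, Q_two,
      show m + 1 - 1 = m from by omega, show m - 1 + 1 = m from by omega,
      Q_eq hm, P_small (by omega : 2 ≤ 3)]
    ring
  · simp only [Finset.mem_Icc]
    omega
  · simp only [Finset.mem_insert, Finset.mem_Icc]
    omega

lemma P_deg (n : ℕ) : (P n).natDegree ≤ n - 3 := by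
  induction n using Nat.strong_induction_on with
  | _ n ih =>
    by_cases hn : n ≤ 3
    · rw [P_small hn]; simp
    · push_neg at hn
      rw [P_rec (by omega)]
      refine Polynomial.natDegree_sum_le_of_forall_le _ _ ?_
      intro m hm
      rw [Finset.mem_Icc] at hm
      have hP1 : (P (m + 1)).natDegree ≤ (m + 1) - 3 := ih (m + 1) (by omega)
      have hQ : (Q (n - m)).natDegree ≤ (n - m) - 2 := by
        by_cases h : 3 ≤ n - m
        · rw [Q_eq h]
          refine le_trans Polynomial.natDegree_mul_le ?_
          have h1 : (1 + X : Polynomial ℚ).natDegree ≤ 1 := by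
            refine le_trans (Polynomial.natDegree_add_le _ _) ?_
            simp
          have h2 := ih (n - m) (by omega)
          omega
        · rw [show n - m = 2 by omega, Q_two]
          simp
      refine le_trans Polynomial.natDegree_mul_le ?_
      refine le_trans (add_le_add (le_of_eq (Polynomial.natDegree_X_pow _))
        (le_trans Polynomial.natDegree_mul_le (add_le_add hP1 hQ))) ?_
      by_cases h2m : 2 ≤ m
      · rw [if_pos h2m]; omega
      · rw [if_neg h2m]; omega

lemma P_coeff (n i : ℕ) :
    (P n).coeff i = (((DAll n).filter (fun S => S.card = i)).card : ℚ) := by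
  classical
  rw [P, Polynomial.finset_sum_coeff]
  simp_rw [Polynomial.coeff_X_pow]
  rw [Finset.sum_boole]
  have : (DAll n).filter (fun x => i = x.card) = (DAll n).filter (fun S => S.card = i) :=
    Finset.filter_congr (fun S _ => by simp [eq_comm])
  rw [this]

end Stmt8

namespace Stmt8
open Polynomial

def emb {n : ℕ} : Fin n × Fin n ↪ ℕ × ℕ :=
  ⟨fun p => (p.1.1, p.2.1), by
    rintro ⟨a, b⟩ ⟨c, d⟩ h
    simp only [Prod.ext_iff, Fin.ext_iff] at h ⊢
    exact h⟩

lemma crosses_iff {n : ℕ} (p q : Fin n × Fin n) :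
    Crosses p q ↔ NCross (p.1.1, p.2.1) (q.1.1, q.2.1) := Iff.rfl

lemma bridge (n i : ℕ) :
    numNonCrossing n i = ((DAll n).filter (fun S => S.card = i)).card := by
  classical
  rw [numNonCrossing, ← Nat.card_eq_finsetCard]
  have key : ∀ S : Finset (Fin n × Fin n), S.card = i → (∀ p ∈ S, IsDiagonal n p) →
      (∀ p ∈ S, ∀ q ∈ S, ¬ Crosses p q) →
      S.map emb ∈ (DAll n).filter (fun S => S.card = i) := by
    intro S h1 h2 h3
    rw [Finset.mem_filter, mem_DAll]
    refine ⟨⟨?_, ?_⟩, by rw [Finset.card_map]; exact h1⟩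
    · intro p hp
      rw [Finset.mem_map] at hp
      obtain ⟨q, hq, rfl⟩ := hp
      have h := h2 q hq
      obtain ⟨ha, hb, hc⟩ := h
      exact ⟨ha, q.2.isLt, hb, hc⟩
    · intro p hp q hq
      rw [Finset.mem_map] at hp hq
      obtain ⟨p', hp', rfl⟩ := hp
      obtain ⟨q', hq', rfl⟩ := hq
      rw [show (emb p' : ℕ × ℕ) = (p'.1.1, p'.2.1) from rfl,
        show (emb q' : ℕ × ℕ) = (q'.1.1, q'.2.1) from rfl, ← crosses_iff]
      exact h3 p' hp' q' hq'
  apply Nat.card_eq_of_bijective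
    (f := fun x => (⟨x.1.map emb, key x.1 x.2.1 x.2.2.1 x.2.2.2⟩ :
      {T // T ∈ (DAll n).filter (fun S => S.card = i)}))
  constructor
  · rintro ⟨S, hS⟩ ⟨T, hT⟩ h
    simp only [Subtype.mk.injEq] at h
    exact Subtype.ext (Finset.map_injective emb h)
  · rintro ⟨T, hT⟩
    rw [Finset.mem_filter] at hT
    obtain ⟨hTD, hTc⟩ := hT
    obtain ⟨hd, hc⟩ := mem_DAll.1 hTD
    set g : {x // x ∈ T} → Fin n × Fin n := fun x =>
      ((⟨x.1.1, lt_trans (hd x.1 x.2).1 (hd x.1 x.2).2.1⟩ : Fin n),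
       (⟨x.1.2, (hd x.1 x.2).2.1⟩ : Fin n)) with hg
    set S : Finset (Fin n × Fin n) := T.attach.image g with hSdef
    have hmap : S.map emb = T := by
      rw [hSdef, Finset.map_eq_image, Finset.image_image]
      have heq : ∀ x ∈ T.attach, (emb ∘ g) x = Subtype.val x := by
        intro x _
        rfl
      rw [Finset.image_congr heq, Finset.attach_image_val]
    have hmemS : ∀ p ∈ S, ((p.1.1 : ℕ), (p.2.1 : ℕ)) ∈ T := by
      intro p hp
      have : (emb p : ℕ × ℕ) ∈ S.map emb := Finset.mem_map_of_mem emb hp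
      rwa [hmap] at this
    refine ⟨⟨S, ?_, ?_, ?_⟩, ?_⟩
    · rw [← hmap, Finset.card_map] at hTc
      exact hTc
    · intro p hp
      have hT' := hd _ (hmemS p hp)
      obtain ⟨ha, hb, hc', hd'⟩ := hT'
      exact ⟨ha, hc', hd'⟩
    · intro p hp q hq hcr
      rw [crosses_iff] at hcr
      exact hc _ (hmemS p hp) _ (hmemS q hq) hcr
    · exact Subtype.ext hmap

lemma F_poly {k : ℕ} :
    ∑ i ∈ Finset.range (k + 2), Polynomial.C ((numNonCrossing (k + 1) i : ℚ)) * X ^ i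
      = P (k + 1) := by
  classical
  apply Polynomial.ext
  intro j
  rw [Polynomial.finset_sum_coeff]
  simp_rw [Polynomial.coeff_C_mul, Polynomial.coeff_X_pow, mul_ite, mul_one, mul_zero]
  rw [Finset.sum_ite_eq (Finset.range (k + 2)) j
    (fun i => ((numNonCrossing (k + 1) i : ℚ)))]
  by_cases hj : j ∈ Finset.range (k + 2)
  · rw [if_pos hj, P_coeff, bridge]
  · rw [if_neg hj]
    rw [Finset.mem_range] at hj
    have hdeg := P_deg (k + 1)
    rw [Polynomial.coeff_eq_zero_of_natDegree_lt (by omega)]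

end Stmt8


namespace Stmt8
open Polynomial

lemma sum_anti {m : ℕ} (hm : 3 ≤ m) (f : ℕ → Polynomial ℚ)
    (hf : ∀ j, f j = if 2 ≤ j then P (j + 1) else 0) :
    ∑ x ∈ Finset.HasAntidiagonal.antidiagonal m, f x.1 * f x.2
      = ∑ a ∈ Finset.Icc 2 (m - 2), P (a + 1) * P (m - a + 1) := by
  classical
  have h1 : ∑ x ∈ Finset.HasAntidiagonal.antidiagonal m, f x.1 * f x.2
      = ∑ x ∈ (Finset.HasAntidiagonal.antidiagonal m).filter (fun x => 2 ≤ x.1 ∧ 2 ≤ x.2),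
          P (x.1 + 1) * P (x.2 + 1) := by
    rw [Finset.sum_filter]
    refine Finset.sum_congr rfl fun x hx => ?_
    rw [hf, hf]
    by_cases h1 : 2 ≤ x.1 <;> by_cases h2 : 2 ≤ x.2 <;> simp [h1, h2]
  rw [h1]
  refine Finset.sum_nbij' (fun x => x.1) (fun a => (a, m - a)) ?_ ?_ ?_ ?_ ?_
  · intro x hx
    simp only [Finset.mem_filter, Finset.HasAntidiagonal.mem_antidiagonal, Finset.mem_Icc] at *
    omega
  · intro a ha
    simp only [Finset.mem_filter, Finset.HasAntidiagonal.mem_antidiagonal, Finset.mem_Icc] at *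
    omega
  · intro x hx
    simp only [Finset.mem_filter, Finset.HasAntidiagonal.mem_antidiagonal] at hx
    rw [Prod.ext_iff]
    constructor
    · rfl
    · simp only
      omega
  · intro a ha
    rfl
  · intro x hx
    simp only [Finset.mem_filter, Finset.HasAntidiagonal.mem_antidiagonal] at hx
    rw [show m - x.1 + 1 = x.2 + 1 by omega]

lemma sum_anti_small {m : ℕ} (hm : m ≤ 3) (f : ℕ → Polynomial ℚ)
    (hf : ∀ j, f j = if 2 ≤ j then P (j + 1) else 0) :
    ∑ x ∈ Finset.HasAntidiagonal.antidiagonal m, f x.1 * f x.2 = 0 := by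
  refine Finset.sum_eq_zero fun x hx => ?_
  rw [Finset.HasAntidiagonal.mem_antidiagonal] at hx
  rw [hf, hf]
  by_cases h1 : 2 ≤ x.1
  · rw [if_neg (by omega : ¬ 2 ≤ x.2), mul_zero]
  · rw [if_neg h1, zero_mul]

end Stmt8


open PowerSeries in
/-- Beckwith's generating function identity: the generating function
`f(t,u) = Σ_{n≥3, i≥0} d(n,i) t^i u^{n-1}` — viewed as a formal power series `F` in `u`
whose coefficients are polynomials in `t` — satisfies the quadratic equation
`t(t+1)·F² + ((2t+1)u - 1)·F + u² = 0`, together with `F = u² + O(u³)` (which pins down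
the branch `f(t,u) = 2·((2t+1)u + sqrt(1 - 2(2t+1)u + u²) - 1) / (1 - (2t+1)²)`). -/
theorem stmt_8 :
    ∀ F : PowerSeries (Polynomial ℚ),
      F = PowerSeries.mk (fun m => if 2 ≤ m then
            ∑ i ∈ Finset.range (m + 2), Polynomial.C ((numNonCrossing (m + 1) i : ℚ)) * Polynomial.X ^ i
          else 0) →
      (PowerSeries.C (Polynomial.X * (Polynomial.X + 1))) * F ^ 2
          + ((PowerSeries.C (2 * Polynomial.X + 1)) * PowerSeries.X - 1) * F
          + PowerSeries.X ^ 2 = 0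
        ∧ PowerSeries.coeff 0 F = 0 ∧ PowerSeries.coeff 1 F = 0
        ∧ PowerSeries.coeff 2 F = 1 := by
  intro F hF
  have hFc : ∀ j, (PowerSeries.coeff j) F
      = if 2 ≤ j then Stmt8.P (j + 1) else 0 := by
    intro j
    rw [hF, PowerSeries.coeff_mk]
    split_ifs with h
    · exact Stmt8.F_poly
    · rfl
  refine ⟨?_, ?_, ?_, ?_⟩
  · apply PowerSeries.ext
    intro j
    rw [map_zero, map_add, map_add, pow_two, sub_mul, one_mul,
      mul_assoc (PowerSeries.C (2 * Polynomial.X + 1)), map_sub,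
      PowerSeries.coeff_C_mul, PowerSeries.coeff_C_mul, PowerSeries.coeff_mul,
      PowerSeries.coeff_X_pow]
    match j with
    | 0 =>
      have hx : (PowerSeries.coeff 0) (PowerSeries.X * F) = 0 := by
        rw [PowerSeries.coeff_zero_eq_constantCoeff, map_mul, PowerSeries.constantCoeff_X,
          zero_mul]
      rw [hx, Stmt8.sum_anti_small (by omega) _ hFc, hFc 0]
      simp
    | 1 =>
      rw [PowerSeries.coeff_succ_X_mul, Stmt8.sum_anti_small (by omega) _ hFc, hFc 0, hFc 1]
      simp
    | 2 =>
      rw [PowerSeries.coeff_succ_X_mul, Stmt8.sum_anti_small (by omega) _ hFc, hFc 1, hFc 2,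
        if_neg (by omega : ¬ (2:ℕ) ≤ 1), if_pos (le_refl 2), Stmt8.P_small (le_refl 3)]
      simp
    | (k + 3) =>
      rw [PowerSeries.coeff_succ_X_mul, Stmt8.sum_anti (by omega) _ hFc, hFc (k + 2),
        hFc (k + 3), if_pos (by omega), if_pos (by omega), if_neg (by omega)]
      have hrec := Stmt8.P_rec' (show 3 ≤ k + 3 by omega)
      rw [show k + 3 - 2 = k + 1 from by omega, show k + 3 + 1 = k + 4 from by omega] at hrec
      rw [show k + 2 + 1 = k + 3 from by omega, show k + 3 + 1 = k + 4 from by omega,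
        show k + 3 - 2 = k + 1 from by omega, hrec]
      ring
  · rw [hFc 0, if_neg (by omega)]
  · rw [hFc 1, if_neg (by omega)]
  · rw [hFc 2, if_pos (by omega), Stmt8.P_small (by omega)]
end

section
/- The Littlewood-Richardson coefficient c^ν_{μλ} with ν = [n-2i, 2^i], λ = [p+2q-2i+1, 2^{i-q}], μ = [n+q-2i-1, 1^{2i-p-q}] equals 1 if i > 0, p = 2i-1 and q = 1, and equals 0 otherwise, for all integers n ≥ 2, 0 ≤ i < (n-1)/2, 0 < p < n, 0 ≤ q ≤ min(i, 2i-p). -/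
/-- A list of natural numbers is a partition if it is weakly decreasing with all parts
positive. -/
def IsPartitionList (l : List ℕ) : Prop := l.Pairwise (· ≥ ·) ∧ ∀ x ∈ l, 0 < x

/-- The cells of the skew shape `ν/λ`: pairs `(r, j)` with `λ_r ≤ j < ν_r`
(rows and columns indexed from `0`). -/
def skewCells (ν lam : List ℕ) : Finset (ℕ × ℕ) :=
  (Finset.range ν.length ×ˢ Finset.range (ν.foldr max 0)).filter
    (fun c => lam.getD c.1 0 ≤ c.2 ∧ c.2 < ν.getD c.1 0)

/-- `T` is a Littlewood–Richardson skew tableau of shape `ν/λ` and weight `μ`: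
entries are positive on the cells of `ν/λ` (and `0` elsewhere), rows weakly increase,
columns strictly increase, the number of entries equal to `k+1` is `μ_k`, and the reverse
reading word (right to left along each row, rows from top to bottom) is a lattice word:
in every prefix, the number of `k+2`'s never exceeds the number of `k+1`'s. -/
def IsLRTableau (ν lam mu : List ℕ) (T : ℕ × ℕ → ℕ) : Prop :=
  (∀ c, c ∉ skewCells ν lam → T c = 0) ∧
  (∀ c ∈ skewCells ν lam, 1 ≤ T c) ∧
  (∀ r j j', (r, j) ∈ skewCells ν lam → (r, j') ∈ skewCells ν lam → j ≤ j' →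
    T (r, j) ≤ T (r, j')) ∧
  (∀ r r' j, (r, j) ∈ skewCells ν lam → (r', j) ∈ skewCells ν lam → r < r' →
    T (r, j) < T (r', j)) ∧
  (∀ k, ((skewCells ν lam).filter (fun c => T c = k + 1)).card = mu.getD k 0) ∧
  (∀ r j k,
    ((skewCells ν lam).filter
      (fun c => (c.1 < r ∨ (c.1 = r ∧ j ≤ c.2)) ∧ T c = k + 2)).card ≤
    ((skewCells ν lam).filter
      (fun c => (c.1 < r ∨ (c.1 = r ∧ j ≤ c.2)) ∧ T c = k + 1)).card)

/-- The Littlewood–Richardson coefficient `c^ν_{μλ}`: the number of Littlewood–Richardson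
skew tableaux of shape `ν/λ` and weight `μ` (equivalently, the multiplicity of `V_ν` in
`Ind_{S_{|μ|}×S_{|λ|}}^{S_{|ν|}}(V_μ ⊠ V_λ)`).  By convention it is `0` if one of the
indexing lists is not a partition. -/
noncomputable def LRCoeff (ν mu lam : List ℕ) : ℕ := by
  classical
  exact if IsPartitionList ν ∧ IsPartitionList mu ∧ IsPartitionList lam then
    Nat.card {T : ℕ × ℕ → ℕ // IsLRTableau ν lam mu T}
  else 0

lemma rep_getD (y k r : ℕ) : (List.replicate k y).getD r 0 = if r < k then y else 0 := by
  induction k generalizing r with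
  | zero => simp
  | succ k ih =>
    cases r with
    | zero => simp [List.replicate_succ]
    | succ r =>
      rw [List.replicate_succ, List.getD_cons_succ, ih]
      simp [Nat.succ_lt_succ_iff]

lemma rep_foldr (k : ℕ) : (List.replicate k 2).foldr max 0 = if k = 0 then 0 else 2 := by
  induction k with
  | zero => simp
  | succ k ih => simp [List.replicate_succ, ih]; split <;> simp_all

lemma rep_sorted (y k : ℕ) : (List.replicate k y).Pairwise (· ≥ ·) := by
  induction k with
  | zero => simp
  | succ k ih =>
    rw [List.replicate_succ, List.pairwise_cons]
    exact ⟨fun b hb => le_of_eq (List.eq_of_mem_replicate hb), ih⟩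

lemma isPart_cons_rep (x y k : ℕ) (hy : 0 < y) (hxy : y ≤ x) :
    IsPartitionList (x :: List.replicate k y) := by
  constructor
  · rw [List.pairwise_cons]
    exact ⟨fun b hb => (List.eq_of_mem_replicate hb) ▸ hxy, rep_sorted y k⟩
  · intro z hz
    rcases List.mem_cons.1 hz with h | h
    · omega
    · rw [List.eq_of_mem_replicate h]; exact hy

lemma mem_skew (N A i k r j : ℕ) (hN : 2 ≤ N) :
    ((r, j) ∈ skewCells (N :: List.replicate i 2) (A :: List.replicate k 2)) ↔
    ((r = 0 ∧ A ≤ j ∧ j < N) ∨ (1 ≤ r ∧ r ≤ i ∧ k < r ∧ j < 2)) := by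
  simp only [skewCells, Finset.mem_filter, Finset.mem_product, Finset.mem_range,
    List.length_cons, List.length_replicate, List.foldr_cons, rep_foldr]
  rw [show (max N (if i = 0 then 0 else 2)) = N by
    rcases Nat.eq_zero_or_pos i with h | h <;> simp [h, Nat.ne_of_gt] <;> omega]
  cases r with
  | zero => simp only [List.getD_cons_zero]; simp only [true_and]; omega
  | succ r =>
    simp only [List.getD_cons_succ, rep_getD]
    split_ifs <;> simp only [false_and, false_or] <;> omega

/-- The all-ones tableau. -/
def oneT (ν lam : List ℕ) : ℕ × ℕ → ℕ := fun c => if c ∈ skewCells ν lam then 1 else 0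

lemma isLR_oneT (ν lam : List ℕ) (N : ℕ) (hcard : (skewCells ν lam).card = N)
    (hcol : ∀ r r' j, (r, j) ∈ skewCells ν lam → (r', j) ∈ skewCells ν lam → r < r' → False) :
    IsLRTableau ν lam [N] (oneT ν lam) := by
  refine ⟨fun c hc => if_neg hc, fun c hc => le_of_eq (if_pos hc).symm,
    fun r j j' hm hm' _ => ?_, fun r r' j hm hm' hlt => (hcol r r' j hm hm' hlt).elim,
    fun k => ?_, fun r j k => ?_⟩
  · unfold oneT; rw [if_pos hm, if_pos hm']
  · cases k with
    | zero =>
      rw [Finset.filter_true_of_mem (fun c hc => by simp [oneT, hc])]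
      simpa using hcard
    | succ k =>
      rw [Finset.filter_false_of_mem (fun c hc => by unfold oneT; rw [if_pos hc]; omega)]
      simp
  · rw [Finset.filter_false_of_mem
      (fun c hc => by unfold oneT; rw [if_pos hc]; rintro ⟨-, h⟩; omega)]
    simp

lemma eq_oneT_of_isLR (ν lam : List ℕ) (N : ℕ) (T : ℕ × ℕ → ℕ)
    (hT : IsLRTableau ν lam [N] T) : T = oneT ν lam := by
  obtain ⟨h0, h1, -, -, hw, -⟩ := hT
  funext c
  by_cases hc : c ∈ skewCells ν lam
  · have hge := h1 c hc
    have hle : T c ≤ 1 := by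
      by_contra hgt
      have hw' := hw (T c - 1)
      have hmem : c ∈ (skewCells ν lam).filter (fun c' => T c' = (T c - 1) + 1) :=
        Finset.mem_filter.2 ⟨hc, by omega⟩
      have : ([N].getD (T c - 1) 0) = 0 := by
        have : T c - 1 = (T c - 2) + 1 := by omega
        rw [this]
        simp
      rw [this] at hw'
      have := Finset.card_eq_zero.1 hw'
      rw [this] at hmem
      exact absurd hmem (Finset.notMem_empty c)
    have : T c = 1 := by omega
    rw [this, oneT, if_pos hc]
  · rw [h0 c hc, oneT, if_neg hc]

lemma card_LR_one (ν lam : List ℕ) (N : ℕ) (hcard : (skewCells ν lam).card = N)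
    (hcol : ∀ r r' j, (r, j) ∈ skewCells ν lam → (r', j) ∈ skewCells ν lam → r < r' → False) :
    Nat.card {T : ℕ × ℕ → ℕ // IsLRTableau ν lam [N] T} = 1 := by
  haveI : Nonempty {T : ℕ × ℕ → ℕ // IsLRTableau ν lam [N] T} :=
    ⟨⟨oneT ν lam, isLR_oneT ν lam N hcard hcol⟩⟩
  haveI : Subsingleton {T : ℕ × ℕ → ℕ // IsLRTableau ν lam [N] T} := by
    constructor
    rintro ⟨T, hT⟩ ⟨T', hT'⟩
    exact Subtype.ext ((eq_oneT_of_isLR ν lam N T hT).trans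
      (eq_oneT_of_isLR ν lam N T' hT').symm)
  exact Nat.card_unique

lemma zero_case (N A i k m s : ℕ) (hN : 2 ≤ N) (hA : 2 ≤ A) (hm : N + 1 ≤ m) :
    IsEmpty {T : ℕ × ℕ → ℕ // IsLRTableau (N :: List.replicate i 2)
      (A :: List.replicate k 2) (m :: List.replicate s 1) T} := by
  constructor
  rintro ⟨T, h0, h1, hrow, hcol, hw, hlat⟩
  set S := skewCells (N :: List.replicate i 2) (A :: List.replicate k 2) with hS
  have hw0 : (S.filter (fun c => T c = 0 + 1)).card = m := by
    simpa using hw 0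
  set F := S.filter (fun c => T c = 0 + 1) with hF
  have hsplit := Finset.card_filter_add_card_filter_not (s := F)
    (p := fun c => c.1 = 0)
  have hb0 : (F.filter (fun c => c.1 = 0)).card ≤ N - A := by
    have hsub : F.filter (fun c => c.1 = 0) ⊆ ({0} : Finset ℕ) ×ˢ Finset.Ico A N := by
      intro c hc
      obtain ⟨r, j⟩ := c
      simp only [hF, Finset.mem_filter] at hc
      obtain ⟨⟨hcS, -⟩, hr0⟩ := hc
      rw [hS, mem_skew N A i k r j hN] at hcS
      have hr0' : r = 0 := hr0
      simp only [Finset.mem_product, Finset.mem_singleton, Finset.mem_Ico]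
      omega
    calc (F.filter (fun c => c.1 = 0)).card ≤ _ := Finset.card_le_card hsub
      _ = N - A := by rw [Finset.card_product]; simp
  have hb1 : (F.filter (fun c => ¬c.1 = 0)).card ≤ 2 := by
    have h2 : (Finset.range 2).card = 2 := by simp
    rw [← h2]
    apply Finset.card_le_card_of_injOn (fun c => c.2)
    · intro c hc
      simp only [Finset.coe_filter, Set.mem_setOf_eq, hF, Finset.mem_filter] at hc
      obtain ⟨⟨hcS, -⟩, hr⟩ := hc
      rw [hS, show c = (c.1, c.2) from rfl, mem_skew N A i k c.1 c.2 hN] at hcS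
      simp only [Finset.mem_coe, Finset.mem_range]
      omega
    · intro c hc c' hc' heq
      simp only [Finset.coe_filter, Set.mem_setOf_eq, hF, Finset.mem_filter] at hc hc'
      obtain ⟨⟨hcS, hc1⟩, -⟩ := hc
      obtain ⟨⟨hcS', hc1'⟩, -⟩ := hc'
      simp only at heq
      rcases lt_trichotomy c.1 c'.1 with hlt | heq1 | hlt
      · exfalso
        have := hcol c.1 c'.1 c.2 (by rwa [Prod.mk.eta]) (by rw [heq]; rwa [Prod.mk.eta]) hlt
        rw [Prod.mk.eta, heq, Prod.mk.eta] at this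
        omega
      · exact Prod.ext heq1 heq
      · exfalso
        have := hcol c'.1 c.1 c'.2 (by rwa [Prod.mk.eta]) (by rw [← heq]; rwa [Prod.mk.eta]) hlt
        rw [Prod.mk.eta, ← heq, Prod.mk.eta] at this
        omega
  omega

/-- For integers `n ≥ 2`, `0 ≤ i < (n-1)/2`, `0 < p < n`, `0 ≤ q ≤ min(i, 2i-p)`, the
Littlewood–Richardson coefficient `c^ν_{μλ}` with `ν = [n-2i, 2^i]`,
`λ = [p+2q-2i+1, 2^{i-q}]`, `μ = [n+q-2i-1, 1^{2i-p-q}]` equals `1` if `i > 0`, `p = 2i-1`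
and `q = 1`, and equals `0` otherwise.  (A "partition" with a part out of order or
nonpositive indexes the coefficient `0`, which is built into `LRCoeff`.) -/
theorem stmt_13 (n i p q : ℕ) (hn : 2 ≤ n) (hi : 2 * i + 1 < n)
    (hp0 : 0 < p) (hpn : p < n) (hqi : q ≤ i) (hqp : p + q ≤ 2 * i) :
    LRCoeff ((n - 2 * i) :: List.replicate i 2)
        ((n + q - 2 * i - 1) :: List.replicate (2 * i - p - q) 1)
        ((p + 2 * q + 1 - 2 * i) :: List.replicate (i - q) 2) =
      (if 0 < i ∧ p = 2 * i - 1 ∧ q = 1 then 1 else 0) := by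
  by_cases h : 0 < i ∧ p = 2 * i - 1 ∧ q = 1
  · rw [if_pos h]
    obtain ⟨hi0, hp, hq⟩ := h
    have e1 : n + q - 2 * i - 1 = n - 2 * i := by omega
    have e2 : 2 * i - p - q = 0 := by omega
    have e3 : p + 2 * q + 1 - 2 * i = 2 := by omega
    have e4 : i - q = i - 1 := by omega
    rw [e1, e2, e3, e4, List.replicate_zero]
    have hN : 2 ≤ n - 2 * i := by omega
    have M : ∀ r j, ((r, j) ∈ skewCells ((n - 2 * i) :: List.replicate i 2)
        (2 :: List.replicate (i - 1) 2)) ↔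
        ((r = 0 ∧ 2 ≤ j ∧ j < n - 2 * i) ∨ (r = i ∧ j < 2)) := by
      intro r j
      rw [mem_skew (n - 2 * i) 2 i (i - 1) r j hN]
      omega
    simp only [LRCoeff]
    rw [if_pos ⟨isPart_cons_rep (n - 2 * i) 2 i (by norm_num) hN,
      isPart_cons_rep (n - 2 * i) 1 0 (by norm_num) (by omega),
      isPart_cons_rep 2 2 (i - 1) (by norm_num) le_rfl⟩]
    apply card_LR_one
    · have hdisj : Disjoint (({0} : Finset ℕ) ×ˢ Finset.Ico 2 (n - 2 * i))
          (({i} : Finset ℕ) ×ˢ Finset.range 2) := by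
        rw [Finset.disjoint_left]
        rintro ⟨r, j⟩ ha hb
        simp only [Finset.mem_product, Finset.mem_singleton, Finset.mem_Ico,
          Finset.mem_range] at ha hb
        omega
      have hE : skewCells ((n - 2 * i) :: List.replicate i 2)
          (2 :: List.replicate (i - 1) 2) =
          (({0} : Finset ℕ) ×ˢ Finset.Ico 2 (n - 2 * i)) ∪
          (({i} : Finset ℕ) ×ˢ Finset.range 2) := by
        ext ⟨r, j⟩
        rw [M r j]
        simp only [Finset.mem_union, Finset.mem_product, Finset.mem_singleton,
          Finset.mem_Ico, Finset.mem_range]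
      rw [hE, Finset.card_union_of_disjoint hdisj, Finset.card_product,
        Finset.card_product]
      simp only [Finset.card_singleton, Nat.card_Ico, Finset.card_range]
      omega
    · intro r r' j hm hm' hlt
      rw [M] at hm hm'
      omega
  · rw [if_neg h]
    by_cases hA : 2 ≤ p + 2 * q + 1 - 2 * i
    · haveI := zero_case (n - 2 * i) (p + 2 * q + 1 - 2 * i) i (i - q)
        (n + q - 2 * i - 1) (2 * i - p - q) (by omega) hA (by omega)
      simp only [LRCoeff]
      split
      · exact Nat.card_of_isEmpty
      · rfl
    · have hnotpart : ¬(IsPartitionList ((n - 2 * i) :: List.replicate i 2) ∧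
          IsPartitionList ((n + q - 2 * i - 1) :: List.replicate (2 * i - p - q) 1) ∧
          IsPartitionList ((p + 2 * q + 1 - 2 * i) :: List.replicate (i - q) 2)) := by
        rintro ⟨-, -, hs, hpos⟩
        have hiq : q < i := by omega
        have h2 : (2 : ℕ) ∈ List.replicate (i - q) 2 :=
          List.mem_replicate.2 ⟨by omega, rfl⟩
        have := List.rel_of_pairwise_cons hs h2
        omega
      simp only [LRCoeff]
      rw [if_neg hnotpart]
end

section
/- The Littlewood-Richardson coefficient c^ν_{μ'λ} with ν = [n-2i, 2^i], λ = [p+2q-2i+1, 2^{i-q}], μ' = [n+q-2i, 1^{2i-p-q-1}] is zero for all integers n ≥ 2, 0 ≤ i < (n-1)/2, 0 < p < n, 0 ≤ q ≤ min(i, 2i-p). -/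
/-- For integers `n ≥ 2`, `0 ≤ i < (n-1)/2`, `0 < p < n`, `0 ≤ q ≤ min(i, 2i-p)`, the
Littlewood–Richardson coefficient `c^ν_{μ'λ}` with `ν = [n-2i, 2^i]`,
`λ = [p+2q-2i+1, 2^{i-q}]`, `μ' = [n+q-2i, 1^{2i-p-q-1}]` is zero.  (A "partition" with a
part out of order or nonpositive indexes the coefficient `0`, which is built into
`LRCoeff`.) -/
theorem stmt_14 (n i p q : ℕ) (hn : 2 ≤ n) (hi : 2 * i + 1 < n)
    (hp0 : 0 < p) (hpn : p < n) (hqi : q ≤ i) (hqp : p + q ≤ 2 * i) :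
    LRCoeff ((n - 2 * i) :: List.replicate i 2)
        ((n + q - 2 * i) :: List.replicate (2 * i - p - q - 1) 1)
        ((p + 2 * q + 1 - 2 * i) :: List.replicate (i - q) 2) = 0 := by
  unfold LRCoeff
  split_ifs with h
  · obtain ⟨hNu, hMu, hLam⟩ := h
    -- facts about a := p + 2*q + 1 - 2*i from λ being a partition
    have ha1 : 0 < p + 2 * q + 1 - 2 * i :=
      hLam.2 _ List.mem_cons_self
    have ha2 : q < i → 2 ≤ p + 2 * q + 1 - 2 * i := by
      intro hqi'
      have := hLam.1
      rw [List.pairwise_cons] at this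
      exact this.1 2 (List.mem_replicate.mpr ⟨by omega, rfl⟩)
    set a := p + 2 * q + 1 - 2 * i with ha
    set Nu : List ℕ := (n - 2 * i) :: List.replicate i 2 with hNudef
    set lam : List ℕ := a :: List.replicate (i - q) 2 with hLamdef
    have hcard0 : Nat.card {T : ℕ × ℕ → ℕ // IsLRTableau Nu lam
        ((n + q - 2 * i) :: List.replicate (2 * i - p - q - 1) 1) T} = 0 := by
      rw [Nat.card_eq_zero]
      left
      constructor
      rintro ⟨T, h0, h1, hrow, hcol, hw, hlat⟩
      -- membership characterization
      have hmem : ∀ c : ℕ × ℕ, c ∈ skewCells Nu lam →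
          (c.1 = 0 → a ≤ c.2 ∧ c.2 < n - 2 * i) ∧ (0 < c.1 → c.2 < 2) := by
        intro c hc
        rw [skewCells, Finset.mem_filter, Finset.mem_product] at hc
        obtain ⟨⟨hr, _⟩, hge, hlt⟩ := hc
        rw [Finset.mem_range] at hr
        constructor
        · intro hc1
          rw [hc1] at hge hlt
          simp only [hLamdef, hNudef, List.getD_cons_zero] at hge hlt
          exact ⟨hge, hlt⟩
        · intro hc1
          obtain ⟨r, hr'⟩ : ∃ r, c.1 = r + 1 := ⟨c.1 - 1, by omega⟩
          rw [hr'] at hlt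
          simp only [hNudef, List.length_cons, List.length_replicate] at hr
          have hri : r < i := by omega
          simp only [hNudef, List.getD_cons_succ] at hlt
          rwa [List.getD_eq_getElem?_getD, List.getElem?_replicate,
            if_pos hri] at hlt
      -- the set of cells with entry 1
      set S₁ := (skewCells Nu lam).filter (fun c => T c = 1) with hS₁
      have hcount : S₁.card = n + q - 2 * i := by
        have := hw 0
        simpa using this
      -- injection into a small set
      have hbound : S₁.card ≤ (n - 2 * i - a) + 2 := by
        have hinj : S₁.card ≤ (({0} ×ˢ Finset.Ico a (n - 2 * i)) ∪
            ({1} ×ˢ Finset.range 2) : Finset (ℕ × ℕ)).card := by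
          apply Finset.card_le_card_of_injOn (fun c => (min c.1 1, c.2))
          · intro c hc
            rw [Finset.mem_coe, Finset.mem_filter] at hc
            rw [Finset.mem_coe]
            obtain ⟨hcm, _⟩ := hc
            rcases Nat.eq_zero_or_pos c.1 with h1 | h1
            · apply Finset.mem_union_left
              rw [Finset.mem_product, Finset.mem_singleton, Finset.mem_Ico]
              have := (hmem c hcm).1 h1
              simp [h1, this.1, this.2]
            · apply Finset.mem_union_right
              rw [Finset.mem_product, Finset.mem_singleton, Finset.mem_range]
              have := (hmem c hcm).2 h1
              constructor
              · simp; omega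
              · exact this
          · rintro ⟨r, j⟩ hc ⟨r', j'⟩ hc' hfe
            rw [Finset.mem_coe, Finset.mem_filter] at hc hc'
            simp only [Prod.mk.injEq] at hfe ⊢
            obtain ⟨hf1, hf2⟩ := hfe
            subst hf2
            refine ⟨?_, rfl⟩
            by_contra hne
            rcases Nat.lt_or_ge r r' with hlt | hge
            · have := hcol r r' j hc.1 hc'.1 hlt
              rw [hc.2, hc'.2] at this
              omega
            · have hlt : r' < r := by omega
              have := hcol r' r j hc'.1 hc.1 hlt
              rw [hc.2, hc'.2] at this
              omega
        refine le_trans hinj (le_trans (Finset.card_union_le _ _) ?_)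
        simp [Nat.card_Ico]
      omega
    rw [hcard0]
  · rfl
end

section
/- Define C(n,i) the binomial coefficient and set P_n(t) = Σ_i (1/(i+1))·C(n-i-2,i)·C(n,i)·t^i. Then for all n ≥ 2, the palindromic defect identity holds: t^{n-1}·P_n(1/t) = Σ_{j=0}^{n-1} (-1)^j·C(n,j)·(t^{n-j-1} - 1) + Σ_{k=2}^{n} C(n,k)·(t-1)^{n-k}·P_k(t), as an identity of Laurent polynomials in t. -/
open LaurentPolynomial

section Aux1
open Finset

-- partial alternating sum
lemma altsum (N : ℕ) : ∀ l : ℕ, ∑ i ∈ range (l+1), (-1:ℚ)^i * ((N+1).choose i : ℚ)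
    = (-1)^l * (N.choose l : ℚ) := by
  intro l
  induction l with
  | zero => simp
  | succ l ih =>
    rw [Finset.sum_range_succ, ih, Nat.choose_succ_succ (N) (l)]
    push_cast
    ring

lemma alt_full (N : ℕ) (hN : 1 ≤ N) : ∑ i ∈ range (N+1), (-1:ℚ)^i * (N.choose i : ℚ) = 0 := by
  obtain ⟨M, rfl⟩ : ∃ M, N = M + 1 := ⟨N - 1, by omega⟩
  rw [altsum M (M+1), Nat.choose_eq_zero_of_lt (by omega), Nat.cast_zero, mul_zero]

-- triangle swap
lemma triangle (n : ℕ) (f : ℕ → ℕ → ℚ) :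
    ∑ i ∈ range n, ∑ j ∈ range (i+1), f i j = ∑ j ∈ range n, ∑ i ∈ Ico j n, f i j := by
  induction n with
  | zero => simp
  | succ n ih =>
    rw [Finset.sum_range_succ, ih]
    rw [Finset.sum_range_succ (f := fun j => ∑ i ∈ Ico j (n+1), f i j)]
    have h1 : ∀ j ∈ range n, ∑ i ∈ Ico j (n+1), f i j = ∑ i ∈ Ico j n, f i j + f n j := by
      intro j hj
      rw [Finset.sum_Ico_succ_top (by simp at hj; omega : j ≤ n)]
    rw [Finset.sum_congr rfl h1, Finset.sum_add_distrib, Finset.sum_range_succ,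
      Nat.Ico_succ_singleton, Finset.sum_singleton]
    ring

-- L4: ∑_{s≤M} C(M,s)C(s,j)(x-1)^{M-s} = C(M,j) x^{M-j}
lemma L4 (M j : ℕ) (x : ℚ) :
    ∑ s ∈ range (M+1), (M.choose s : ℚ) * (s.choose j : ℚ) * (x-1)^(M-s)
      = (M.choose j : ℚ) * x^(M-j) := by
  by_cases hj : j ≤ M
  · have h1 : ∑ s ∈ range (M+1), (M.choose s : ℚ) * (s.choose j : ℚ) * (x-1)^(M-s)
        = ∑ s ∈ Ico j (M+1), (M.choose s : ℚ) * (s.choose j : ℚ) * (x-1)^(M-s) := by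
      rw [Finset.range_eq_Ico]
      refine (Finset.sum_subset (Finset.Ico_subset_Ico (by omega) le_rfl) ?_).symm
      intro s hs hs'
      simp only [Finset.mem_Ico] at hs hs'
      rw [Nat.choose_eq_zero_of_lt (show s < j by omega), Nat.cast_zero, mul_zero, zero_mul]
    rw [h1, Finset.sum_Ico_eq_sum_range]
    have h2 : ∀ u ∈ range (M + 1 - j), (M.choose (j+u) : ℚ) * ((j+u).choose j : ℚ) * (x-1)^(M-(j+u))
        = (M.choose j : ℚ) * (((M-j).choose u : ℚ) * (x-1)^((M-j)-u)) := by
      intro u hu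
      simp only [Finset.mem_range] at hu
      have := Nat.choose_mul (n := M) (show j ≤ j + u by omega)
      have hc : (M.choose (j+u) : ℚ) * ((j+u).choose j : ℚ) = (M.choose j : ℚ) * ((M-j).choose (j+u-j) : ℚ) := by
        exact_mod_cast congrArg (Nat.cast : ℕ → ℚ) this
      rw [hc]
      have : j + u - j = u := by omega
      rw [this]
      have : M - (j+u) = (M-j) - u := by omega
      rw [this, mul_assoc]
    rw [Finset.sum_congr rfl h2, ← Finset.mul_sum]
    congr 1
    have hr : M + 1 - j = (M - j) + 1 := by omega
    rw [hr]
    conv_rhs => rw [show x = 1+(x-1) by ring]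
    rw [add_pow]
    exact Finset.sum_congr rfl fun u hu => by rw [one_pow]; ring
  · push_neg at hj
    rw [Nat.choose_eq_zero_of_lt hj, Nat.cast_zero, zero_mul]
    refine Finset.sum_eq_zero fun s hs => ?_
    simp only [Finset.mem_range] at hs
    rw [Nat.choose_eq_zero_of_lt (show s < j by omega), Nat.cast_zero, mul_zero, zero_mul]

-- sign merge helper
lemma sign_merge (l j : ℕ) (hj : j ≤ l) : (-1:ℚ)^l * (-1:ℚ)^j = (-1:ℚ)^(l-j) := by
  rw [← pow_add]
  have h2 : l + j = (l - j) + 2*j := by omega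
  rw [h2, pow_add, pow_mul, neg_one_sq, one_pow, mul_one]

lemma inv_pascal (m l : ℕ) :
    (m.choose l : ℚ) = ∑ j ∈ range (l+1), (-1:ℚ)^(l-j) * ((m+1).choose j : ℚ) := by
  have h := altsum m l
  have h1 : ∑ j ∈ range (l+1), (-1:ℚ)^(l-j) * ((m+1).choose j : ℚ)
      = (-1:ℚ)^l * ∑ j ∈ range (l+1), (-1:ℚ)^j * ((m+1).choose j : ℚ) := by
    rw [Finset.mul_sum]
    refine Finset.sum_congr rfl fun j hj => ?_
    simp only [Finset.mem_range] at hj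
    rw [← mul_assoc, sign_merge l j (by omega)]
  rw [h1, h, ← mul_assoc, ← pow_add]
  rw [Even.neg_one_pow ⟨l, rfl⟩, one_mul]

-- L3
lemma L3 (s i : ℕ) :
    ∑ j ∈ range (i+1), (-1:ℚ)^(i-j) * ((i-j+1 : ℕ) : ℚ) * ((s+2).choose j : ℚ)
      = (s.choose i : ℚ) := by
  rw [inv_pascal s i]
  have h1 : ∀ l ∈ range (i+1), (-1:ℚ)^(i-l) * ((s+1).choose l : ℚ)
      = ∑ j ∈ range (l+1), (-1:ℚ)^(i-l) * ((-1:ℚ)^(l-j) * ((s+2).choose j : ℚ)) := by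
    intro l hl
    rw [← Finset.mul_sum, ← inv_pascal (s+1) l]
  rw [Finset.sum_congr rfl h1, triangle (i+1) (fun l j => (-1:ℚ)^(i-l) * ((-1:ℚ)^(l-j) * ((s+2).choose j : ℚ)))]
  refine (Finset.sum_congr rfl fun j hj => ?_).symm
  simp only [Finset.mem_range] at hj
  have h2 : ∀ l ∈ Ico j (i+1), (-1:ℚ)^(i-l) * ((-1:ℚ)^(l-j) * ((s+2).choose j : ℚ))
      = (-1:ℚ)^(i-j) * ((s+2).choose j : ℚ) := by
    intro l hl
    simp only [Finset.mem_Ico] at hl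
    rw [← mul_assoc, ← pow_add]
    congr 2
    omega
  rw [Finset.sum_congr rfl h2, Finset.sum_const, Nat.card_Ico, nsmul_eq_mul]
  have : (i + 1 - j : ℕ) = (i - j + 1 : ℕ) := by omega
  rw [this]
  ring

lemma dzero (i : ℕ) : ∑ j ∈ range (i+1), (-1:ℚ)^(i-j) * ((i-j+1 : ℕ) : ℚ) * ((Nat.choose 0 j : ℕ) : ℚ)
    = (-1:ℚ)^i * ((i:ℚ)+1) := by
  rw [Finset.sum_eq_single_of_mem 0 (Finset.mem_range.2 (by omega))
    (fun j hj hj0 => by simp [Nat.choose_eq_zero_of_lt (show 0 < j by omega)])]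
  simp

lemma done (i : ℕ) : ∑ j ∈ range (i+1), (-1:ℚ)^(i-j) * ((i-j+1 : ℕ) : ℚ) * ((Nat.choose 1 j : ℕ) : ℚ)
    = (-1:ℚ)^i := by
  rcases Nat.eq_zero_or_pos i with hi | hi
  · subst hi; simp
  · have hsub : ({0, 1} : Finset ℕ) ⊆ range (i+1) := by
      intro j hj; simp only [Finset.mem_insert, Finset.mem_singleton] at hj
      rcases hj with rfl | rfl <;> simp [Finset.mem_range] <;> omega
    rw [← Finset.sum_subset hsub (fun j hj hj' => by
      have : 1 < j := by
        simp only [Finset.mem_insert, Finset.mem_singleton] at hj'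
        simp only [Finset.mem_range] at hj
        omega
      rw [Nat.choose_eq_zero_of_lt this, Nat.cast_zero, mul_zero])]
    rw [Finset.sum_pair (by norm_num)]
    have h0 : (i - 0 + 1 : ℕ) = i + 1 := by omega
    have h1 : (i - 1 + 1 : ℕ) = i := by omega
    rw [h0, h1]
    have hpow : (-1:ℚ)^(i-1) * (-1:ℚ) = (-1:ℚ)^i := by
      rw [← pow_succ, show i-1+1 = i by omega]
    simp only [Nat.sub_zero, Nat.choose_self, Nat.choose_zero_right, Nat.cast_one, mul_one]
    push_cast
    nlinarith [hpow]

lemma L1' (M i : ℕ) (x : ℚ) :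
    ∑ s ∈ range (M-1), ((M.choose (s+2) : ℕ) : ℚ) * ((s.choose i : ℕ) : ℚ) * (x-1)^(M-2-s)
      = ∑ j ∈ range (i+1), (-1:ℚ)^(i-j) * ((i-j+1 : ℕ) : ℚ) * ((M.choose j : ℕ) : ℚ) * x^(M-j)
        - ((i:ℚ)+1) * (-1:ℚ)^i * (x-1)^M - (M:ℚ) * (-1:ℚ)^i * (x-1)^(M-1) := by
  have RHS' : ∑ s' ∈ range (M+1), ((M.choose s' : ℕ) : ℚ)
        * (∑ j ∈ range (i+1), (-1:ℚ)^(i-j) * ((i-j+1 : ℕ) : ℚ) * ((s'.choose j : ℕ) : ℚ))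
        * (x-1)^(M-s')
      = ∑ j ∈ range (i+1), (-1:ℚ)^(i-j) * ((i-j+1 : ℕ) : ℚ) * ((M.choose j : ℕ) : ℚ) * x^(M-j) := by
    have step : ∀ s' ∈ range (M+1), ((M.choose s' : ℕ) : ℚ)
          * (∑ j ∈ range (i+1), (-1:ℚ)^(i-j) * ((i-j+1 : ℕ) : ℚ) * ((s'.choose j : ℕ) : ℚ))
          * (x-1)^(M-s')
        = ∑ j ∈ range (i+1), (-1:ℚ)^(i-j) * ((i-j+1 : ℕ) : ℚ)
            * (((M.choose s' : ℕ) : ℚ) * ((s'.choose j : ℕ) : ℚ) * (x-1)^(M-s')) := by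
      intro s' _
      rw [Finset.mul_sum, Finset.sum_mul]
      exact Finset.sum_congr rfl fun j _ => by ring
    rw [Finset.sum_congr rfl step, Finset.sum_comm]
    refine Finset.sum_congr rfl fun j _ => ?_
    rw [← Finset.mul_sum, L4 M j x]
    ring
  rcases M with _ | m
  · simp only [Nat.zero_sub, Finset.range_zero, Finset.sum_empty, Nat.cast_zero, zero_mul,
      sub_zero, pow_zero, mul_one]
    rw [dzero]
    ring
  · -- M = m+1
    have hsplit := Finset.sum_range_succ' (fun s' => (((m+1).choose s' : ℕ) : ℚ)
        * (∑ j ∈ range (i+1), (-1:ℚ)^(i-j) * ((i-j+1 : ℕ) : ℚ) * ((s'.choose j : ℕ) : ℚ))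
        * (x-1)^(m+1-s')) (m+1)
    rcases m with _ | k
    · -- M = 1
      simp only [Nat.reduceAdd, Nat.sub_self, Finset.range_zero, Finset.sum_empty] at *
      rw [Finset.sum_range_succ, Finset.sum_range_one] at RHS'
      rw [dzero, done] at RHS'
      simp only [Nat.choose_zero_right, Nat.choose_one_right, Nat.cast_one] at RHS'
      rw [← RHS']
      push_cast
      ring
    · -- M = k+2
      rw [hsplit] at RHS'
      rw [Finset.sum_range_succ' (fun s => (((k+2).choose (s+1) : ℕ) : ℚ)
          * (∑ j ∈ range (i+1), (-1:ℚ)^(i-j) * ((i-j+1 : ℕ) : ℚ) * (((s+1).choose j : ℕ) : ℚ))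
          * (x-1)^(k+2-(s+1))) (k+1)] at RHS'
      rw [dzero, done] at RHS'
      simp only [Nat.choose_zero_right, Nat.choose_one_right, Nat.cast_one, Nat.cast_ofNat] at RHS'
      have hterm : ∀ s ∈ range (k+1), (((k+2).choose (s+1+1) : ℕ) : ℚ)
            * (∑ j ∈ range (i+1), (-1:ℚ)^(i-j) * ((i-j+1 : ℕ) : ℚ) * (((s+1+1).choose j : ℕ) : ℚ))
            * (x-1)^(k+2-(s+1+1))
          = (((k+2).choose (s+2) : ℕ) : ℚ) * ((s.choose i : ℕ) : ℚ) * (x-1)^(k+2-2-s) := by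
        intro s _
        have hd : ∑ j ∈ range (i+1), (-1:ℚ)^(i-j) * ((i-j+1 : ℕ) : ℚ) * (((s+1+1).choose j : ℕ) : ℚ)
            = ((s.choose i : ℕ) : ℚ) := L3 s i
        rw [hd]
        rw [show s+1+1 = s+2 by omega, show k+2-(s+1+1) = k+2-2-s by omega]
      rw [Finset.sum_congr rfl hterm] at RHS'
      have hrange : (k+2) - 1 = k+1 := by omega
      rw [hrange]
      rw [show k+1+1 = k+2 from rfl] at RHS' ⊢
      rw [Nat.choose_one_right] at RHS'
      push_cast at RHS' ⊢
      linarith [RHS']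

end Aux1

section Aux
open Finset

lemma cKL_eq_zero_of_le {k i : ℕ} (hk : 2 ≤ k) (hik : k ≤ i + 1) : cKL k i = 0 := by
  unfold cKL
  rw [show k - i - 2 = 0 by omega, Nat.choose_eq_zero_of_lt (show 0 < i by omega)]
  simp

lemma L2 (n i : ℕ) (hi : i < n) (x : ℚ) :
    ∑ k ∈ Finset.Icc 2 n, ((n.choose k : ℕ) : ℚ) * cKL k i * (x-1)^(n-k)
      = ((n.choose i : ℕ) : ℚ) / ((i:ℚ)+1)
        * ∑ s ∈ range (n-i-1), (((n-i).choose (s+2) : ℕ) : ℚ) * ((s.choose i : ℕ) : ℚ) * (x-1)^(n-i-2-s) := by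
  rw [← Finset.Ico_add_one_right_eq_Icc]
  rw [← Finset.sum_Ico_consecutive _ (show 2 ≤ i+2 by omega) (show i+2 ≤ n+1 by omega)]
  have hz : ∑ k ∈ Ico 2 (i+2), ((n.choose k : ℕ) : ℚ) * cKL k i * (x-1)^(n-k) = 0 := by
    refine Finset.sum_eq_zero fun k hk => ?_
    simp only [Finset.mem_Ico] at hk
    rw [cKL_eq_zero_of_le hk.1 (by omega), mul_zero, zero_mul]
  rw [hz, zero_add, Finset.sum_Ico_eq_sum_range, show n+1-(i+2) = n-i-1 by omega]
  rw [Finset.mul_sum]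
  refine Finset.sum_congr rfl fun s hs => ?_
  simp only [Finset.mem_range] at hs
  unfold cKL
  have key2 : (n.choose (i+2+s) : ℚ) * ((i+2+s).choose i : ℚ)
      = (n.choose i : ℚ) * ((n-i).choose (s+2) : ℚ) := by
    have h0 := Nat.choose_mul (n := n) (show i ≤ i+2+s by omega)
    rw [show i+2+s-i = s+2 by omega] at h0
    exact_mod_cast congrArg (Nat.cast : ℕ → ℚ) h0
  rw [show i+2+s-i-2 = s by omega, show n-(i+2+s) = n-i-2-s by omega]
  have hne : ((i:ℚ)+1) ≠ 0 := by positivity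
  field_simp
  linear_combination key2 * ((s.choose i : ℕ) : ℚ) * (x-1)^(n-i-2-s)

lemma swapBig (n : ℕ) (x : ℚ) :
    ∑ k ∈ Finset.Icc 2 n, ((n.choose k : ℕ) : ℚ) * ((x-1)^(n-k) * ∑ i ∈ range k, cKL k i * x^i)
      = ∑ i ∈ range n, x^i * (∑ k ∈ Finset.Icc 2 n, ((n.choose k : ℕ) : ℚ) * cKL k i * (x-1)^(n-k)) := by
  have h1 : ∀ k ∈ Finset.Icc 2 n, ((n.choose k : ℕ) : ℚ) * ((x-1)^(n-k) * ∑ i ∈ range k, cKL k i * x^i)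
      = ∑ i ∈ range n, x^i * (((n.choose k : ℕ) : ℚ) * cKL k i * (x-1)^(n-k)) := by
    intro k hk
    simp only [Finset.mem_Icc] at hk
    have hext : ∑ i ∈ range k, cKL k i * x^i = ∑ i ∈ range n, cKL k i * x^i := by
      refine Finset.sum_subset (Finset.range_subset_range.2 hk.2) fun i hi hi' => ?_
      simp only [Finset.mem_range, not_lt] at hi hi'
      rw [cKL_eq_zero_of_le hk.1 (by omega), zero_mul]
    rw [hext, Finset.mul_sum, Finset.mul_sum]
    exact Finset.sum_congr rfl fun i _ => by ring
  rw [Finset.sum_congr rfl h1, Finset.sum_comm]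
  exact Finset.sum_congr rfl fun i _ => by rw [Finset.mul_sum]

lemma C1 (n : ℕ) (x : ℚ) :
    ∑ i ∈ range n, (-1:ℚ)^i * ((n.choose i : ℕ) : ℚ) * x^i * (x-1)^(n-i)
      = (-1:ℚ)^n - (-x)^n := by
  have h := add_pow (-x) (x-1) n
  rw [show (-x) + (x-1) = -1 by ring, Finset.sum_range_succ, Nat.choose_self, Nat.sub_self,
    pow_zero, Nat.cast_one, mul_one, mul_one] at h
  have h2 : ∀ i ∈ range n, (-1:ℚ)^i * ((n.choose i : ℕ) : ℚ) * x^i * (x-1)^(n-i)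
      = (-x)^i * (x-1)^(n-i) * ((n.choose i : ℕ) : ℚ) := by
    intro i _
    rw [neg_pow]
    ring
  rw [Finset.sum_congr rfl h2]
  linarith [h]

lemma ES (n : ℕ) (hn : 1 ≤ n) (x : ℚ) :
    ∑ j ∈ range n, (-1:ℚ)^j * ((n.choose j : ℕ) : ℚ) * x^(n-1-j)
      = ∑ i ∈ range n, (-1:ℚ)^i * ((n.choose (i+1) : ℕ) : ℚ) * x^i * (x-1)^(n-1-i) := by
  rcases eq_or_ne x 0 with rfl | hx
  · rw [Finset.sum_eq_single_of_mem (n-1) (Finset.mem_range.2 (by omega)) (fun j hj hne => by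
      rw [zero_pow (show n-1-j ≠ 0 by simp only [Finset.mem_range] at hj; omega), mul_zero])]
    rw [Finset.sum_eq_single_of_mem 0 (Finset.mem_range.2 (by omega)) (fun i hi hne => by
      rw [zero_pow hne, mul_zero, zero_mul])]
    rw [Nat.sub_self, pow_zero, mul_one, pow_zero, zero_add, Nat.sub_zero,
      show n.choose (n-1) = n.choose 1 from Nat.choose_symm (show 1 ≤ n by omega),
      show (0:ℚ)-1 = -1 by norm_num]
    ring
  · apply mul_left_cancel₀ hx
    have hE : x * ∑ j ∈ range n, (-1:ℚ)^j * ((n.choose j : ℕ) : ℚ) * x^(n-1-j)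
        = (x-1)^n - (-1:ℚ)^n := by
      rw [Finset.mul_sum]
      have h1 : ∀ j ∈ range n, x * ((-1:ℚ)^j * ((n.choose j : ℕ) : ℚ) * x^(n-1-j))
          = (-1:ℚ)^j * x^(n-j) * ((n.choose j : ℕ) : ℚ) := by
        intro j hj
        simp only [Finset.mem_range] at hj
        rw [show n-j = (n-1-j)+1 by omega, pow_succ]
        ring
      rw [Finset.sum_congr rfl h1]
      have h := add_pow (-1:ℚ) x n
      rw [show (-1:ℚ) + x = x-1 by ring, Finset.sum_range_succ, Nat.choose_self, Nat.sub_self,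
        pow_zero, Nat.cast_one, mul_one, mul_one] at h
      linarith [h]
    have hS : x * ∑ i ∈ range n, (-1:ℚ)^i * ((n.choose (i+1) : ℕ) : ℚ) * x^i * (x-1)^(n-1-i)
        = (x-1)^n - (-1:ℚ)^n := by
      rw [Finset.mul_sum]
      have h := add_pow (-x) (x-1) n
      rw [show (-x) + (x-1) = -1 by ring] at h
      rw [Finset.sum_range_succ' (fun k => (-x)^k * (x-1)^(n-k) * ((n.choose k : ℕ) : ℚ)) n] at h
      simp only [Nat.choose_zero_right, Nat.cast_one, mul_one, pow_zero, one_mul, Nat.sub_zero] at h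
      have h1 : ∀ i ∈ range n, (-x)^(i+1) * (x-1)^(n-(i+1)) * ((n.choose (i+1) : ℕ) : ℚ)
          = -(x * ((-1:ℚ)^i * ((n.choose (i+1) : ℕ) : ℚ) * x^i * (x-1)^(n-1-i))) := by
        intro i hi
        rw [show n-(i+1) = n-1-i by omega, neg_pow, pow_succ, pow_succ]
        ring
      rw [Finset.sum_congr rfl h1, Finset.sum_neg_distrib] at h
      linarith [h]
    rw [hE, hS]

lemma shrink_alt (N m : ℕ) (h : N + 1 ≤ m) :
    ∑ i ∈ range m, (-1:ℚ)^i * (N.choose i : ℚ) = ∑ i ∈ range (N+1), (-1:ℚ)^i * (N.choose i : ℚ) := by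
  refine (Finset.sum_subset (Finset.range_subset_range.2 h) fun i hi hi' => ?_).symm
  simp only [Finset.mem_range, not_lt] at hi hi'
  rw [Nat.choose_eq_zero_of_lt (by omega), Nat.cast_zero, mul_zero]

lemma T1 (n j : ℕ) (hj1 : 1 ≤ j) (hjn : j < n) :
    ∑ i ∈ Ico j n, (-1:ℚ)^(i-j) * ((n-j).choose i : ℚ) = ((n-j-1).choose (j-1) : ℚ) := by
  have h1 : ∀ i ∈ Ico j n, (-1:ℚ)^(i-j) * ((n-j).choose i : ℚ)
      = (-1:ℚ)^j * ((-1:ℚ)^i * ((n-j).choose i : ℚ)) := by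
    intro i hi
    simp only [Finset.mem_Ico] at hi
    rw [← sign_merge i j hi.1]
    ring
  rw [Finset.sum_congr rfl h1, ← Finset.mul_sum, Finset.sum_Ico_eq_sub _ (by omega : j ≤ n)]
  rw [shrink_alt (n-j) n (by omega), alt_full (n-j) (by omega)]
  have h2 : ∑ i ∈ range j, (-1:ℚ)^i * ((n-j).choose i : ℚ)
      = (-1:ℚ)^(j-1) * ((n-j-1).choose (j-1) : ℚ) := by
    have := altsum (n-j-1) (j-1)
    rw [show n-j-1+1 = n-j by omega, show j-1+1 = j by omega] at this
    exact this
  rw [h2, zero_sub]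
  have hodd : (-1:ℚ)^(j+(j-1)) = -1 := Odd.neg_one_pow ⟨j-1, by omega⟩
  rw [pow_add] at hodd
  linear_combination (-(((n-j-1).choose (j-1) : ℕ):ℚ)) * hodd

lemma T2 (n j : ℕ) (hj1 : 1 ≤ j) (hjn : j < n) :
    ∑ i ∈ Ico j n, (-1:ℚ)^(i-j) * ((n-j).choose i : ℚ) / ((i:ℚ)+1)
      = ((n-j).choose j : ℚ) / (((n-j : ℕ):ℚ)+1) := by
  have hstep : ∀ i ∈ Ico j n, (-1:ℚ)^(i-j) * ((n-j).choose i : ℚ) / ((i:ℚ)+1)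
      = (-1:ℚ)^j * ((-1:ℚ)^i * ((n-j+1).choose (i+1) : ℚ)) / (((n-j : ℕ):ℚ)+1) := by
    intro i hi
    simp only [Finset.mem_Ico] at hi
    have hnat := Nat.add_one_mul_choose_eq (n-j) i
    have hc : (((n-j : ℕ):ℚ)+1) * ((n-j).choose i : ℚ) = ((n-j+1).choose (i+1) : ℚ) * ((i:ℚ)+1) := by
      exact_mod_cast congrArg (Nat.cast : ℕ → ℚ) hnat
    rw [← sign_merge i j hi.1]
    have hi1 : ((i:ℚ)+1) ≠ 0 := by positivity
    have hnj : (((n-j : ℕ):ℚ)+1) ≠ 0 := by positivity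
    field_simp
    linear_combination hc
  rw [Finset.sum_congr rfl hstep]
  rw [← Finset.sum_div]
  rw [← Finset.mul_sum]
  have key : ∑ i ∈ Ico j n, (-1:ℚ)^i * ((n-j+1).choose (i+1) : ℚ) = (-1:ℚ)^j * ((n-j).choose j : ℚ) := by
    rw [Finset.sum_Ico_eq_sub _ (by omega : j ≤ n)]
    have gen : ∀ m : ℕ, ∑ i ∈ range m, (-1:ℚ)^i * ((n-j+1).choose (i+1) : ℚ)
        = 1 - ∑ r ∈ range (m+1), (-1:ℚ)^r * ((n-j+1).choose r : ℚ) := by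
      intro m
      rw [Finset.sum_range_succ' (fun r => (-1:ℚ)^r * ((n-j+1).choose r : ℚ)) m]
      simp only [pow_zero, Nat.choose_zero_right, Nat.cast_one, one_mul]
      have : ∀ i ∈ range m, (-1:ℚ)^(i+1) * ((n-j+1).choose (i+1) : ℚ)
          = -((-1:ℚ)^i * ((n-j+1).choose (i+1) : ℚ)) := by
        intro i _
        rw [pow_succ]
        ring
      rw [Finset.sum_congr rfl this, Finset.sum_neg_distrib]
      ring
    rw [gen n, gen j]
    rw [show ∑ r ∈ range (n+1), (-1:ℚ)^r * ((n-j+1).choose r : ℚ) = 0 by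
      rw [shrink_alt (n-j+1) (n+1) (by omega), alt_full (n-j+1) (by omega)]]
    have := altsum (n-j) j
    rw [show n-j+1 = n-j+1 from rfl] at this
    rw [this]
    ring
  rw [key, ← mul_assoc, ← pow_add, Even.neg_one_pow ⟨j, by omega⟩, one_mul]

lemma chooseswap (n i j : ℕ) :
    (n.choose i : ℚ) * ((n-i).choose j : ℚ) = (n.choose j : ℚ) * ((n-j).choose i : ℚ) := by
  by_cases h : i + j ≤ n
  · have h1 := Nat.choose_mul (n := n) (show i ≤ i+j by omega)
    have h2 := Nat.choose_mul (n := n) (show j ≤ i+j by omega)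
    rw [show i+j-i = j by omega] at h1
    rw [show i+j-j = i by omega] at h2
    have h3 : (i+j).choose i = (i+j).choose j := by
      rw [← Nat.choose_symm (show i ≤ i+j by omega), show i+j-i = j by omega]
    rw [h3] at h1
    exact_mod_cast congrArg (Nat.cast : ℕ → ℚ) (h1.symm.trans h2)
  · push_neg at h
    by_cases hi : i ≤ n
    · rw [Nat.choose_eq_zero_of_lt (show n-i < j by omega), Nat.cast_zero, mul_zero]
      by_cases hj : j ≤ n
      · rw [Nat.choose_eq_zero_of_lt (show n-j < i by omega), Nat.cast_zero, mul_zero]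
      · rw [Nat.choose_eq_zero_of_lt (show n < j by omega), Nat.cast_zero, zero_mul]
    · rw [Nat.choose_eq_zero_of_lt (show n < i by omega), Nat.cast_zero, zero_mul]
      rw [Nat.choose_eq_zero_of_lt (show n-j < i by omega), Nat.cast_zero, mul_zero]

lemma final_alg (n j : ℕ) (hj1 : 1 ≤ j) (hjn : j < n) :
    (n.choose j : ℚ) * ((n-j-1).choose (j-1) : ℚ)
      - (j:ℚ) * (n.choose j : ℚ) * (((n-j).choose j : ℚ) / (((n-j : ℕ):ℚ)+1))
    = ((n-j-1).choose (j-1) : ℚ) * (n.choose (j-1) : ℚ) / (j:ℚ) := by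
  have hj0 : (j:ℚ) ≠ 0 := by positivity
  have hN : (((n-j : ℕ):ℚ)+1) ≠ 0 := by positivity
  have e1 : (n.choose j : ℚ) * (j:ℚ) = (n.choose (j-1) : ℚ) * (((n-j : ℕ):ℚ)+1) := by
    have hnat := Nat.choose_succ_right_eq n (j-1)
    rw [show j-1+1 = j by omega, show n-(j-1) = (n-j)+1 by omega] at hnat
    exact_mod_cast congrArg (Nat.cast : ℕ → ℚ) hnat
  by_cases h2j : 2*j ≤ n
  · have e2 : ((n-j).choose j : ℚ) = ((n-j-1).choose (j-1) : ℚ) + ((n-j-1).choose j : ℚ) := by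
      have hnat := Nat.choose_succ_succ (n-j-1) (j-1)
      rw [Nat.succ_eq_add_one, Nat.succ_eq_add_one, show n-j-1+1 = n-j by omega, show j-1+1 = j by omega] at hnat
      exact_mod_cast congrArg (Nat.cast : ℕ → ℚ) hnat
    have e3 : ((n-j-1).choose j : ℚ) * (j:ℚ) = ((n-j-1).choose (j-1) : ℚ) * (((n-2*j : ℕ)):ℚ) := by
      have hnat := Nat.choose_succ_right_eq (n-j-1) (j-1)
      rw [show j-1+1 = j by omega, show n-j-1-(j-1) = n-2*j by omega] at hnat
      exact_mod_cast congrArg (Nat.cast : ℕ → ℚ) hnat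
    have hcast1 : ((n-j : ℕ):ℚ) = (n:ℚ) - (j:ℚ) := by
      rw [Nat.cast_sub (by omega)]
    have hcast2 : ((n-2*j : ℕ):ℚ) = (n:ℚ) - 2*(j:ℚ) := by
      rw [Nat.cast_sub (by omega)]; push_cast; ring
    rw [hcast1] at e1 hN ⊢
    rw [hcast2] at e3
    field_simp
    linear_combination (((n:ℚ)-j+1) * ((n-j-1).choose (j-1) : ℚ) - ((n-j).choose j : ℚ) * (j:ℚ)) * e1
      + (n.choose (j-1) : ℚ) * ((n:ℚ)-j+1) * (-(j:ℚ)) * e2 + ((n:ℚ)-j+1) * (n.choose (j-1):ℚ) * (-1) * e3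
  · have hc : ((n-j-1).choose (j-1) : ℚ) = 0 := by
      rw [Nat.choose_eq_zero_of_lt (by omega), Nat.cast_zero]
    have he : ((n-j).choose j : ℚ) = 0 := by
      rw [Nat.choose_eq_zero_of_lt (by omega), Nat.cast_zero]
    rw [hc, he]
    ring

lemma L5 (n j : ℕ) (hj1 : 1 ≤ j) (hjn : j < n) :
    ∑ i ∈ Ico j n, (-1:ℚ)^(i-j) * ((i-j+1 : ℕ):ℚ) / ((i:ℚ)+1) * (n.choose i : ℚ) * ((n-i).choose j : ℚ)
      = ((n-j-1).choose (j-1) : ℚ) * (n.choose (j-1) : ℚ) / (j:ℚ) := by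
  have hstep : ∀ i ∈ Ico j n, (-1:ℚ)^(i-j) * ((i-j+1 : ℕ):ℚ) / ((i:ℚ)+1) * (n.choose i : ℚ) * ((n-i).choose j : ℚ)
      = (n.choose j : ℚ) * ((-1:ℚ)^(i-j) * ((n-j).choose i : ℚ))
        - (j:ℚ) * (n.choose j : ℚ) * ((-1:ℚ)^(i-j) * ((n-j).choose i : ℚ) / ((i:ℚ)+1)) := by
    intro i hi
    simp only [Finset.mem_Ico] at hi
    have hc := chooseswap n i j
    have hcast : ((i-j+1 : ℕ):ℚ) = (i:ℚ) - (j:ℚ) + 1 := by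
      rw [show i-j+1 = (i-j)+1 from rfl]
      push_cast [Nat.cast_sub hi.1]
      ring
    rw [hcast]
    have hi1 : ((i:ℚ)+1) ≠ 0 := by positivity
    field_simp
    linear_combination ((i:ℚ) - j + 1) * hc
  rw [Finset.sum_congr rfl hstep, Finset.sum_sub_distrib, ← Finset.mul_sum, ← Finset.mul_sum]
  rw [T1 n j hj1 hjn, T2 n j hj1 hjn]
  exact final_alg n j hj1 hjn

lemma mainQ (n : ℕ) (hn : 2 ≤ n) (x : ℚ) :
    ∑ i ∈ range n, cKL n i * x^(n-1-i)
      = ∑ j ∈ range n, (-1:ℚ)^j * (n.choose j : ℚ) * (x^(n-j-1) - 1)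
        + ∑ k ∈ Finset.Icc 2 n, (n.choose k : ℚ) * ((x-1)^(n-k) * ∑ i ∈ range k, cKL k i * x^i) := by
  have haltn : ∑ i ∈ range n, (-1:ℚ)^i * (n.choose i : ℚ) = -(-1:ℚ)^n := by
    have h := alt_full n (by omega)
    rw [Finset.sum_range_succ, Nat.choose_self, Nat.cast_one, mul_one] at h
    linarith
  rw [swapBig n x]
  have hInner : ∀ i ∈ range n,
      x^i * (∑ k ∈ Finset.Icc 2 n, ((n.choose k : ℕ) : ℚ) * cKL k i * (x-1)^(n-k))
      = ((n.choose i : ℚ)/((i:ℚ)+1)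
          * ∑ j ∈ range (i+1), (-1:ℚ)^(i-j) * ((i-j+1 : ℕ):ℚ) * (((n-i).choose j : ℕ):ℚ) * (x^i * x^(n-i-j)))
        - (-1:ℚ)^i * (n.choose i : ℚ) * x^i * (x-1)^(n-i)
        - (-1:ℚ)^i * ((n.choose (i+1) : ℕ):ℚ) * x^i * (x-1)^(n-1-i) := by
    intro i hi
    simp only [Finset.mem_range] at hi
    rw [L2 n i hi x, L1' (n-i) i x]
    have hch : ((n.choose (i+1) : ℕ):ℚ) * ((i:ℚ)+1) = (n.choose i : ℚ) * ((n-i : ℕ):ℚ) := by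
      have hnat := Nat.choose_succ_right_eq n i
      exact_mod_cast congrArg (Nat.cast : ℕ → ℚ) hnat
    have hxS : x^i * (∑ j ∈ range (i+1), (-1:ℚ)^(i-j) * ((i-j+1 : ℕ):ℚ) * (((n-i).choose j : ℕ):ℚ) * x^(n-i-j))
        = ∑ j ∈ range (i+1), (-1:ℚ)^(i-j) * ((i-j+1 : ℕ):ℚ) * (((n-i).choose j : ℕ):ℚ) * (x^i * x^(n-i-j)) := by
      rw [Finset.mul_sum]
      exact Finset.sum_congr rfl fun j _ => by ring
    rw [← hxS, show (n-i)-1 = n-1-i by omega]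
    have hi1 : ((i:ℚ)+1) ≠ 0 := by positivity
    field_simp
    linear_combination ((-1:ℚ)^i * x^i * (x-1)^(n-1-i)) * hch
  rw [Finset.sum_congr rfl hInner, Finset.sum_sub_distrib, Finset.sum_sub_distrib, C1 n x]
  have hD : ∑ i ∈ range n, ((n.choose i : ℚ)/((i:ℚ)+1)
        * ∑ j ∈ range (i+1), (-1:ℚ)^(i-j) * ((i-j+1 : ℕ):ℚ) * (((n-i).choose j : ℕ):ℚ) * (x^i * x^(n-i-j)))
      = ∑ i ∈ range n, cKL n i * x^(n-1-i) - (-x)^n := by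
    have h0 : ∀ i ∈ range n, (n.choose i : ℚ)/((i:ℚ)+1)
          * ∑ j ∈ range (i+1), (-1:ℚ)^(i-j) * ((i-j+1 : ℕ):ℚ) * (((n-i).choose j : ℕ):ℚ) * (x^i * x^(n-i-j))
        = ∑ j ∈ range (i+1), (n.choose i : ℚ)/((i:ℚ)+1)
            * ((-1:ℚ)^(i-j) * ((i-j+1 : ℕ):ℚ) * (((n-i).choose j : ℕ):ℚ) * (x^i * x^(n-i-j))) := by
      intro i _
      rw [Finset.mul_sum]
    rw [Finset.sum_congr rfl h0,
      triangle n (fun i j => (n.choose i : ℚ)/((i:ℚ)+1)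
        * ((-1:ℚ)^(i-j) * ((i-j+1 : ℕ):ℚ) * (((n-i).choose j : ℕ):ℚ) * (x^i * x^(n-i-j))))]
    have hsplit := Finset.sum_range_succ' (fun j => ∑ i ∈ Ico j n, (n.choose i : ℚ)/((i:ℚ)+1)
        * ((-1:ℚ)^(i-j) * ((i-j+1 : ℕ):ℚ) * (((n-i).choose j : ℕ):ℚ) * (x^i * x^(n-i-j)))) (n-1)
    rw [show n-1+1 = n by omega] at hsplit
    rw [hsplit]
    have hj0 : ∑ i ∈ Ico 0 n, (n.choose i : ℚ)/((i:ℚ)+1)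
        * ((-1:ℚ)^(i-0) * ((i-0+1 : ℕ):ℚ) * (((n-i).choose 0 : ℕ):ℚ) * (x^i * x^(n-i-0)))
        = -(-x)^n := by
      have h1 : ∀ i ∈ Ico 0 n, (n.choose i : ℚ)/((i:ℚ)+1)
          * ((-1:ℚ)^(i-0) * ((i-0+1 : ℕ):ℚ) * (((n-i).choose 0 : ℕ):ℚ) * (x^i * x^(n-i-0)))
          = ((-1:ℚ)^i * (n.choose i : ℚ)) * x^n := by
        intro i hi
        simp only [Finset.mem_Ico] at hi
        rw [Nat.sub_zero, Nat.sub_zero, Nat.choose_zero_right, Nat.cast_one,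
          show x^i * x^(n-i) = x^n by rw [← pow_add]; congr 1; omega]
        have hi1 : ((i:ℚ)+1) ≠ 0 := by positivity
        push_cast
        field_simp
      rw [Finset.sum_congr rfl h1, ← Finset.sum_mul, ← Nat.Ico_zero_eq_range] at *
      rw [haltn, neg_pow]
      ring
    have hj1 : ∀ j' ∈ range (n-1), ∑ i ∈ Ico (j'+1) n, (n.choose i : ℚ)/((i:ℚ)+1)
        * ((-1:ℚ)^(i-(j'+1)) * ((i-(j'+1)+1 : ℕ):ℚ) * (((n-i).choose (j'+1) : ℕ):ℚ) * (x^i * x^(n-i-(j'+1))))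
        = cKL n j' * x^(n-1-j') := by
      intro j' hj'
      simp only [Finset.mem_range] at hj'
      set j := j' + 1 with hjdef
      have hj1' : 1 ≤ j := by omega
      have hjn : j < n := by omega
      have h1 : ∀ i ∈ Ico j n, (n.choose i : ℚ)/((i:ℚ)+1)
          * ((-1:ℚ)^(i-j) * ((i-j+1 : ℕ):ℚ) * (((n-i).choose j : ℕ):ℚ) * (x^i * x^(n-i-j)))
          = x^(n-j) * ((-1:ℚ)^(i-j) * ((i-j+1 : ℕ):ℚ) / ((i:ℚ)+1) * (n.choose i : ℚ) * ((n-i).choose j : ℚ)) := by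
        intro i hi
        simp only [Finset.mem_Ico] at hi
        by_cases hij : i + j ≤ n
        · rw [show x^i * x^(n-i-j) = x^(n-j) by rw [← pow_add]; congr 1; omega]
          ring
        · rw [Nat.choose_eq_zero_of_lt (show n - i < j by omega), Nat.cast_zero]
          ring
      rw [Finset.sum_congr rfl h1, ← Finset.mul_sum, L5 n j hj1' hjn]
      unfold cKL
      rw [show n-j-1 = n - j' - 2 by omega, show j-1 = j' by omega, show n-j = n-1-j' by omega]
      have : ((j':ℚ)+1) ≠ 0 := by positivity
      field_simp [hjdef]
      rw [hjdef]; push_cast; ring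
    rw [Finset.sum_congr rfl hj1, hj0]
    have hlast := Finset.sum_range_succ (fun i => cKL n i * x^(n-1-i)) (n-1)
    rw [show n-1+1 = n by omega] at hlast
    rw [hlast, cKL_eq_zero_of_le hn (by omega), zero_mul, add_zero]
    ring
  rw [hD]
  have hFirst : ∑ j ∈ range n, (-1:ℚ)^j * (n.choose j : ℚ) * (x^(n-j-1) - 1)
      = (∑ j ∈ range n, (-1:ℚ)^j * (n.choose j : ℚ) * x^(n-1-j)) + (-1:ℚ)^n := by
    have h1 : ∀ j ∈ range n, (-1:ℚ)^j * (n.choose j : ℚ) * (x^(n-j-1) - 1)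
        = (-1:ℚ)^j * (n.choose j : ℚ) * x^(n-1-j) - (-1:ℚ)^j * (n.choose j : ℚ) := by
      intro j _
      rw [show n-j-1 = n-1-j by omega]
      ring
    rw [Finset.sum_congr rfl h1, Finset.sum_sub_distrib, haltn]
    ring
  rw [hFirst, ← ES n (by omega) x]
  ring


end Aux

/-- The Kazhdan-Lusztig polynomial `P_n(x) = Σ_i c(n,i)·x^i` of the uniform matroid of
rank `n-1` on `n` elements, evaluated at an element `x` of a `ℚ`-algebra (the sum may be
taken over `i < n` since `c(n,i) = 0` for `i ≥ (n-1)/2`). -/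
noncomputable def PKL (n : ℕ) (x : LaurentPolynomial ℚ) : LaurentPolynomial ℚ :=
  ∑ i ∈ Finset.range n, cKL n i • x ^ i

/-- For all `n ≥ 2`, the palindromic defect identity of Laurent polynomials in `t`:
`t^{n-1}·P_n(1/t) = Σ_{j=0}^{n-1} (-1)^j·C(n,j)·(t^{n-j-1} - 1)
  + Σ_{k=2}^{n} C(n,k)·(t-1)^{n-k}·P_k(t)`. -/
theorem stmt_17 (n : ℕ) (hn : 2 ≤ n) :
    (T 1 : LaurentPolynomial ℚ) ^ (n - 1) * PKL n (T (-1)) =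
      (∑ j ∈ Finset.range n,
        ((-1 : ℚ) ^ j * (Nat.choose n j : ℚ)) • ((T 1 : LaurentPolynomial ℚ) ^ (n - j - 1) - 1))
      + ∑ k ∈ Finset.Icc 2 n,
        (Nat.choose n k : ℚ) • (((T 1 : LaurentPolynomial ℚ) - 1) ^ (n - k) * PKL k (T 1)) := by

  have hCsmul : ∀ (r : ℚ) (y : LaurentPolynomial ℚ), r • y = LaurentPolynomial.C r * y := by
    intro r y
    rw [Algebra.smul_def, ← LaurentPolynomial.C_eq_algebraMap]
  have hpq : (∑ i ∈ Finset.range n, Polynomial.C (cKL n i) * Polynomial.X ^ (n-1-i) : Polynomial ℚ)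
      = (∑ j ∈ Finset.range n, Polynomial.C ((-1:ℚ)^j * (Nat.choose n j : ℚ)) * (Polynomial.X ^ (n-j-1) - 1))
        + ∑ k ∈ Finset.Icc 2 n, Polynomial.C ((Nat.choose n k : ℚ))
            * ((Polynomial.X - 1)^(n-k) * ∑ i ∈ Finset.range k, Polynomial.C (cKL k i) * Polynomial.X ^ i) := by
    apply Polynomial.funext
    intro x
    simp only [Polynomial.eval_finset_sum, Polynomial.eval_add, Polynomial.eval_mul,
      Polynomial.eval_pow, Polynomial.eval_sub, Polynomial.eval_one, Polynomial.eval_C,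
      Polynomial.eval_X]
    exact mainQ n hn x
  have hthis := congrArg (Polynomial.toLaurent (R := ℚ)) hpq
  simp only [map_add, map_sum, map_mul, map_sub, map_pow, map_one, Polynomial.toLaurent_C,
    Polynomial.toLaurent_X] at hthis
  have hL : (T 1 : LaurentPolynomial ℚ) ^ (n - 1) * PKL n (T (-1))
      = ∑ i ∈ Finset.range n, LaurentPolynomial.C (cKL n i) * (T 1 : LaurentPolynomial ℚ)^(n-1-i) := by
    rw [PKL, Finset.mul_sum]
    refine Finset.sum_congr rfl fun i hi => ?_
    simp only [Finset.mem_range] at hi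
    rw [mul_smul_comm, hCsmul]
    congr 1
    rw [T_pow, T_pow, T_pow, mul_one, mul_one, ← T_add]
    congr 1
    push_cast
    omega
  rw [hL]
  rw [hthis]
  congr 1
  · exact Finset.sum_congr rfl fun j _ => by rw [hCsmul, map_mul, map_pow]
  · refine Finset.sum_congr rfl fun k _ => ?_
    rw [hCsmul, PKL]
    congr 2
    exact Finset.sum_congr rfl fun i _ => by rw [hCsmul]
end
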